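/- arXiv:1212.3776 — 5 statements merged into one kernel-verified Lean document; each statement's English description precedes it below -/
import Mathlib

section
/- Let E be a closed preordered space and x ∈ E. Suppose the topology does not distinguish the points of [x] = d(x) ∩ i(x) (i.e., any open set containing one point of [x] contains all of [x]) and that x admits a c-compact neighborhood. Then the c-compact neighborhoods of x form a base of the neighborhood filter at x, and E is weakly convex at x. -/
set_option linter.unusedSectionVars false
set_option linter.unusedVariables false
open Set Filter


open Topology

/-- The increasing hull `i(S) = {y | ∃ x ∈ S, x ≤ y}`. -/
def incHull {E : Type*} [Preorder E] (S : Set E) : Set E := {y | ∃ x ∈ S, x ≤ y}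

/-- The decreasing hull `d(S) = {y | ∃ x ∈ S, y ≤ x}`. -/
def decHull {E : Type*} [Preorder E] (S : Set E) : Set E := {y | ∃ x ∈ S, y ≤ x}

section Helpers

variable {E : Type*} [TopologicalSpace E] [Preorder E]

lemma subset_decHull (S : Set E) : S ⊆ decHull S := fun y hy => ⟨y, hy, le_refl y⟩
lemma subset_incHull (S : Set E) : S ⊆ incHull S := fun y hy => ⟨y, hy, le_refl y⟩

lemma decHull_mono {S T : Set E} (h : S ⊆ T) : decHull S ⊆ decHull T := by
  rintro y ⟨z, hz, hle⟩; exact ⟨z, h hz, hle⟩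
lemma incHull_mono {S T : Set E} (h : S ⊆ T) : incHull S ⊆ incHull T := by
  rintro y ⟨z, hz, hle⟩; exact ⟨z, h hz, hle⟩

lemma decHull_idem (S : Set E) : decHull (decHull S) = decHull S := by
  refine subset_antisymm ?_ (subset_decHull _)
  rintro y ⟨z, ⟨w, hw, h2⟩, h1⟩; exact ⟨w, hw, h1.trans h2⟩
lemma incHull_idem (S : Set E) : incHull (incHull S) = incHull S := by
  refine subset_antisymm ?_ (subset_incHull _)
  rintro y ⟨z, ⟨w, hw, h2⟩, h1⟩; exact ⟨w, hw, h2.trans h1⟩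

lemma decHull_inter_eq {X Y : Set E} (hX : decHull X = X) (hY : decHull Y = Y) :
    decHull (X ∩ Y) = X ∩ Y :=
  subset_antisymm (fun z hz => ⟨hX ▸ decHull_mono inter_subset_left hz,
    hY ▸ decHull_mono inter_subset_right hz⟩) (subset_decHull _)
lemma incHull_inter_eq {X Y : Set E} (hX : incHull X = X) (hY : incHull Y = Y) :
    incHull (X ∩ Y) = X ∩ Y :=
  subset_antisymm (fun z hz => ⟨hX ▸ incHull_mono inter_subset_left hz,
    hY ▸ incHull_mono inter_subset_right hz⟩) (subset_incHull _)

lemma rect_of_not_le (hG : IsClosed {p : E × E | p.1 ≤ p.2}) {z w : E} (h : ¬ z ≤ w) :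
    ∃ V W : Set E, IsOpen V ∧ IsOpen W ∧ z ∈ V ∧ w ∈ W ∧ ∀ a ∈ V, ∀ b ∈ W, ¬ a ≤ b := by
  have hco : IsOpen {p : E × E | p.1 ≤ p.2}ᶜ := hG.isOpen_compl
  rw [isOpen_prod_iff] at hco
  obtain ⟨V, W, hV, hW, hz, hw, hsub⟩ := hco z w h
  exact ⟨V, W, hV, hW, hz, hw, fun a ha b hb hab => hsub (Set.mk_mem_prod ha hb) hab⟩

lemma sep_of_not_le (hG : IsClosed {p : E × E | p.1 ≤ p.2}) {z w : E} (h : ¬ z ≤ w) :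
    ∃ V W : Set E, IsOpen V ∧ IsOpen W ∧ z ∈ V ∧ w ∈ W ∧ V ∩ W = ∅ := by
  obtain ⟨V, W, hV, hW, hz, hw, hr⟩ := rect_of_not_le hG h
  refine ⟨V, W, hV, hW, hz, hw, eq_empty_iff_forall_notMem.mpr ?_⟩
  rintro a ⟨h1, h2⟩
  exact hr a h1 a h2 (le_refl a)

lemma isClosed_incHull (hG : IsClosed {p : E × E | p.1 ≤ p.2}) {C : Set E}
    (hC : IsCompact C) : IsClosed (incHull C) := by
  rw [← isOpen_compl_iff, isOpen_iff_mem_nhds]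
  intro y hy
  have h : ∀ c ∈ C, ¬ c ≤ y := fun c hc hle => hy ⟨c, hc, hle⟩
  choose! V W hV hW hcV hyW hr using fun c (hc : c ∈ C) => rect_of_not_le hG (h c hc)
  obtain ⟨u, huC, hcov⟩ := hC.elim_nhds_subcover V (fun c hc => (hV c hc).mem_nhds (hcV c hc))
  have hWn : (⋂ c ∈ u, W c) ∈ 𝓝 y :=
    (biInter_finset_mem u).mpr fun c hc => (hW c (huC c hc)).mem_nhds (hyW c (huC c hc))
  refine Filter.mem_of_superset hWn ?_
  rintro b hb ⟨c, hc, hcb⟩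
  obtain ⟨c', hc'u, hcc'⟩ := mem_iUnion₂.mp (hcov hc)
  exact hr c' (huC c' hc'u) c hcc' b (mem_iInter₂.mp hb c' hc'u) hcb

lemma isClosed_decHull (hG : IsClosed {p : E × E | p.1 ≤ p.2}) {C : Set E}
    (hC : IsCompact C) : IsClosed (decHull C) := by
  rw [← isOpen_compl_iff, isOpen_iff_mem_nhds]
  intro y hy
  have h : ∀ c ∈ C, ¬ y ≤ c := fun c hc hle => hy ⟨c, hc, hle⟩
  choose! V W hV hW hyV hcW hr using fun c (hc : c ∈ C) => rect_of_not_le hG (h c hc)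
  obtain ⟨u, huC, hcov⟩ := hC.elim_nhds_subcover W (fun c hc => (hW c hc).mem_nhds (hcW c hc))
  have hVn : (⋂ c ∈ u, V c) ∈ 𝓝 y :=
    (biInter_finset_mem u).mpr fun c hc => (hV c (huC c hc)).mem_nhds (hyV c (huC c hc))
  refine Filter.mem_of_superset hVn ?_
  rintro b hb ⟨c, hc, hbc⟩
  obtain ⟨c', hc'u, hcc'⟩ := mem_iUnion₂.mp (hcov hc)
  exact hr c' (huC c' hc'u) b (mem_iInter₂.mp hb c' hc'u) c hcc' hbc

lemma le_both_of_closure (hG : IsClosed {p : E × E | p.1 ≤ p.2}) {a x : E}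
    (h : ∀ U : Set E, IsOpen U → x ∈ U → a ∈ closure U) : a ≤ x ∧ x ≤ a := by
  constructor
  · by_contra hax
    obtain ⟨V, W, hV, hW, haV, hxW, hd⟩ := sep_of_not_le hG hax
    obtain ⟨u, huV, huW⟩ := mem_closure_iff.mp (h W hW hxW) V hV haV
    exact absurd (show u ∈ V ∩ W from ⟨huV, huW⟩) (by simp [hd])
  · by_contra hxa
    obtain ⟨V, W, hV, hW, hxV, haW, hd⟩ := sep_of_not_le hG hxa
    obtain ⟨u, huW, huV⟩ := mem_closure_iff.mp (h V hV hxV) W hW haW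
    exact absurd (show u ∈ V ∩ W from ⟨huV, huW⟩) (by simp [hd])

lemma cluster_key (hG : IsClosed {p : E × E | p.1 ≤ p.2}) {K : Set E} (hKc : IsCompact K)
    (x : E) {P : Set E} (hP : IsClosed P)
    (h : ∀ U : Set E, IsOpen U → x ∈ U → (closure U ∩ K ∩ P).Nonempty) :
    ∃ a ∈ K ∩ P, a ≤ x ∧ x ≤ a := by
  haveI : Nonempty {U : Set E // IsOpen U ∧ x ∈ U} := ⟨⟨Set.univ, isOpen_univ, mem_univ x⟩⟩
  set f : {U : Set E // IsOpen U ∧ x ∈ U} → Filter E :=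
    fun U => 𝓟 (closure U.1 ∩ K ∩ P) with hf
  have hdir : Directed (· ≥ ·) f := by
    intro U V
    refine ⟨⟨U.1 ∩ V.1, U.2.1.inter V.2.1, U.2.2, V.2.2⟩, ?_, ?_⟩ <;>
      exact principal_mono.mpr (by
        refine inter_subset_inter_left _ (inter_subset_inter_left _ ?_)
        exact (closure_mono (by simp [inter_subset_left, inter_subset_right])))
  have hne : ∀ U, (f U).NeBot := fun U => principal_neBot_iff.mpr (h U.1 U.2.1 U.2.2)
  haveI : (⨅ U, f U).NeBot := iInf_neBot_of_directed' hdir hne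
  have hle : (⨅ U, f U) ≤ 𝓟 K := le_trans (iInf_le f ⟨Set.univ, isOpen_univ, mem_univ x⟩)
    (principal_mono.mpr (inter_subset_left.trans inter_subset_right))
  obtain ⟨a, haK, hcl⟩ := hKc hle
  have hmem : ∀ U : {U : Set E // IsOpen U ∧ x ∈ U}, a ∈ closure (closure U.1 ∩ K ∩ P) := by
    intro U
    have : (closure U.1 ∩ K ∩ P) ∈ ⨅ V, f V := mem_iInf_of_mem U (mem_principal_self _)
    exact mem_closure_iff_clusterPt.mpr (hcl.mono (le_principal_iff.mpr this))
  have haP : a ∈ P := closure_minimal inter_subset_right hP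
    (hmem ⟨Set.univ, isOpen_univ, mem_univ x⟩)
  have hacl : ∀ U : Set E, IsOpen U → x ∈ U → a ∈ closure U := by
    intro U hU hxU
    have hsub : closure (closure U ∩ K ∩ P) ⊆ closure U := by
      nth_rewrite 2 [← closure_closure (s := U)]
      exact closure_mono (inter_subset_left.trans inter_subset_left)
    exact hsub (hmem ⟨U, hU, hxU⟩)
  obtain ⟨h1, h2⟩ := le_both_of_closure hG hacl
  exact ⟨a, ⟨haK, haP⟩, h1, h2⟩


lemma compact_sep (hG : IsClosed {p : E × E | p.1 ≤ p.2}) {s t : Set E}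
    (hs : IsCompact s) (ht : IsCompact t)
    (h : ∀ z ∈ s, ∀ w ∈ t, ¬ z ≤ w) :
    ∃ G₁ G₂ : Set E, IsOpen G₁ ∧ IsOpen G₂ ∧ s ⊆ G₁ ∧ t ⊆ G₂ ∧ G₁ ∩ G₂ = ∅ := by
  have step1 : ∀ z ∈ s, ∃ V Wt : Set E, IsOpen V ∧ IsOpen Wt ∧ z ∈ V ∧ t ⊆ Wt ∧ V ∩ Wt = ∅ := by
    intro z hz
    choose! V W hV hW hzV hwW hd using fun w (hw : w ∈ t) => sep_of_not_le hG (h z hz w hw)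
    obtain ⟨u, hut, hcov⟩ := ht.elim_nhds_subcover W (fun w hw => (hW w hw).mem_nhds (hwW w hw))
    refine ⟨⋂ w ∈ u, V w, ⋃ w ∈ u, W w,
      isOpen_biInter_finset (fun w hw => hV w (hut w hw)),
      isOpen_biUnion (fun w hw => hW w (hut w hw)),
      mem_iInter₂.mpr (fun w hw => hzV w (hut w hw)), hcov, ?_⟩
    rw [eq_empty_iff_forall_notMem]
    rintro a ⟨ha1, ha2⟩
    obtain ⟨w, hwu, haw⟩ := mem_iUnion₂.mp ha2
    have haV : a ∈ V w := mem_iInter₂.mp ha1 w hwu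
    exact absurd (show a ∈ V w ∩ W w from ⟨haV, haw⟩) (by simp [hd w (hut w hwu)])
  choose! V Wt hVo hWo hzV htW hdj using step1
  obtain ⟨u, hus, hcov⟩ := hs.elim_nhds_subcover V (fun z hz => (hVo z hz).mem_nhds (hzV z hz))
  refine ⟨⋃ z ∈ u, V z, ⋂ z ∈ u, Wt z,
    isOpen_biUnion (fun z hz => hVo z (hus z hz)),
    isOpen_biInter_finset (fun z hz => hWo z (hus z hz)), hcov,
    subset_iInter₂ (fun z hz => htW z (hus z hz)), ?_⟩
  rw [eq_empty_iff_forall_notMem]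
  rintro a ⟨ha1, ha2⟩
  obtain ⟨z, hzu, haz⟩ := mem_iUnion₂.mp ha1
  have haW : a ∈ Wt z := mem_iInter₂.mp ha2 z hzu
  exact absurd (show a ∈ V z ∩ Wt z from ⟨haz, haW⟩) (by simp [hdj z (hus z hzu)])

end Helpers

/-- A subset `C` is (order) convex if `C = d(C) ∩ i(C)`. -/
def IsOrdConvex {E : Type*} [Preorder E] (C : Set E) : Prop :=
  decHull C ∩ incHull C = C

/-- A `c`-set: an intersection of a closed decreasing set and a closed
increasing set. -/
def IsCSet {E : Type*} [TopologicalSpace E] [Preorder E] (C : Set E) : Prop :=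
  ∃ A B : Set E, IsClosed A ∧ decHull A = A ∧ IsClosed B ∧ incHull B = B ∧ C = A ∩ B

/-- In a closed preordered space, if the topology does not distinguish the
points of `[x] = d(x) ∩ i(x)` and `x` admits a c-compact neighborhood, then the
c-compact neighborhoods of `x` form a base of the neighborhood filter at `x`
and the space is weakly convex at `x`. -/
theorem cCompact_basis_of_cCompact_nbhd {E : Type*} [TopologicalSpace E] [Preorder E]
    (hG : IsClosed {p : E × E | p.1 ≤ p.2}) (x : E)
    (hindist : ∀ O : Set E, IsOpen O →
      (∃ y ∈ decHull {x} ∩ incHull {x}, y ∈ O) → decHull {x} ∩ incHull {x} ⊆ O)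
    (hc : ∃ N ∈ 𝓝 x, IsCompact N ∧ IsCSet N) :
    (∀ O ∈ 𝓝 x, ∃ N ∈ 𝓝 x, IsCompact N ∧ IsCSet N ∧ N ⊆ O) ∧
    (∀ O ∈ 𝓝 x, ∃ N ∈ 𝓝 x, IsOpen N ∧ IsOrdConvex N ∧ N ⊆ O) := by
  obtain ⟨K, hKn, hKc, A, B, hAcl, hAdec, hBcl, hBinc, hKAB⟩ := hc
  have hKclosed : IsClosed K := by rw [hKAB]; exact hAcl.inter hBcl
  have hxdi : x ∈ decHull {x} ∩ incHull {x} :=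
    ⟨⟨x, rfl, le_refl x⟩, ⟨x, rfl, le_refl x⟩⟩
  have part1 : ∀ O ∈ 𝓝 x, ∃ N ∈ 𝓝 x, IsCompact N ∧ IsCSet N ∧ N ⊆ O := by
    intro O hO
    set O' := interior O with hO'def
    have hO'open : IsOpen O' := isOpen_interior
    have hxO' : x ∈ O' := mem_interior_iff_mem_nhds.mpr hO
    have hclass : decHull {x} ∩ incHull {x} ⊆ O' := hindist O' hO'open ⟨x, hxdi, hxO'⟩
    haveI : Nonempty {U : Set E // IsOpen U ∧ x ∈ U} := ⟨⟨Set.univ, isOpen_univ, mem_univ x⟩⟩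
    set S : {U : Set E // IsOpen U ∧ x ∈ U} → Set E := fun U => closure U.1 ∩ K with hS
    have hScomp : ∀ U, IsCompact (S U) := fun U => hKc.inter_left isClosed_closure
    set N : {U : Set E // IsOpen U ∧ x ∈ U} → Set E :=
      fun U => decHull (S U) ∩ incHull (S U) ∩ K with hN
    have hNclosed : ∀ U, IsClosed (N U) := fun U =>
      ((isClosed_decHull hG (hScomp U)).inter (isClosed_incHull hG (hScomp U))).inter hKclosed
    have hNsubK : ∀ U, N U ⊆ K := fun U z hz => hz.2
    have hNcomp : ∀ U, IsCompact (N U) := fun U => hKc.of_isClosed_subset (hNclosed U) (hNsubK U)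
    have hNnhds : ∀ U, N U ∈ 𝓝 x := by
      intro U
      have h1 : U.1 ∩ interior K ∈ 𝓝 x :=
        (U.2.1.inter isOpen_interior).mem_nhds ⟨U.2.2, mem_interior_iff_mem_nhds.mpr hKn⟩
      refine Filter.mem_of_superset h1 ?_
      intro z hz
      have hzS : z ∈ S U := ⟨subset_closure hz.1, interior_subset hz.2⟩
      exact ⟨⟨subset_decHull _ hzS, subset_incHull _ hzS⟩, hzS.2⟩
    have hNCSet : ∀ U, IsCSet (N U) := by
      intro U
      refine ⟨decHull (S U) ∩ A, incHull (S U) ∩ B,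
        (isClosed_decHull hG (hScomp U)).inter hAcl,
        decHull_inter_eq (decHull_idem _) hAdec,
        (isClosed_incHull hG (hScomp U)).inter hBcl,
        incHull_inter_eq (incHull_idem _) hBinc, ?_⟩
      show decHull (S U) ∩ incHull (S U) ∩ K = _
      rw [hKAB]
      ext z
      constructor
      · rintro ⟨⟨h1, h2⟩, h3, h4⟩; exact ⟨⟨h1, h3⟩, h2, h4⟩
      · rintro ⟨⟨h1, h3⟩, h2, h4⟩; exact ⟨⟨h1, h2⟩, h3, h4⟩
    have hInter : K ∩ ⋂ U, (N U ∩ O'ᶜ) = ∅ := by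
      rw [eq_empty_iff_forall_notMem]
      rintro y ⟨hyK, hy⟩
      rw [mem_iInter] at hy
      have hyN : ∀ U, y ∈ N U := fun U => (hy U).1
      have hyO' : y ∉ O' := (hy ⟨Set.univ, isOpen_univ, mem_univ x⟩).2
      have h1 : ∀ U : Set E, IsOpen U → x ∈ U → (closure U ∩ K ∩ decHull {y}).Nonempty := by
        intro U hU hxU
        obtain ⟨⟨_, ⟨a, haS, hay⟩⟩, _⟩ := hyN ⟨U, hU, hxU⟩
        exact ⟨a, haS, ⟨y, rfl, hay⟩⟩
      have h2 : ∀ U : Set E, IsOpen U → x ∈ U → (closure U ∩ K ∩ incHull {y}).Nonempty := by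
        intro U hU hxU
        obtain ⟨⟨⟨b, hbS, hyb⟩, _⟩, _⟩ := hyN ⟨U, hU, hxU⟩
        exact ⟨b, hbS, ⟨y, rfl, hyb⟩⟩
      obtain ⟨a, ⟨-, _, rfl, hay⟩, hax, hxa⟩ :=
        cluster_key hG hKc x (isClosed_decHull hG isCompact_singleton) h1
      obtain ⟨b, ⟨-, _, rfl, hyb⟩, hbx, hxb⟩ :=
        cluster_key hG hKc x (isClosed_incHull hG isCompact_singleton) h2
      exact hyO' (hclass ⟨⟨x, rfl, hyb.trans hbx⟩, ⟨x, rfl, hxa.trans hay⟩⟩)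
    have hSmono : ∀ U V : {U : Set E // IsOpen U ∧ x ∈ U}, U.1 ⊆ V.1 → S U ⊆ S V :=
      fun U V h => inter_subset_inter_left _ (closure_mono h)
    have hNmono : ∀ U V : {U : Set E // IsOpen U ∧ x ∈ U}, U.1 ⊆ V.1 → N U ⊆ N V :=
      fun U V h => inter_subset_inter_left _
        (inter_subset_inter (decHull_mono (hSmono U V h)) (incHull_mono (hSmono U V h)))
    have hdir : Directed (· ⊇ ·) (fun U : {U : Set E // IsOpen U ∧ x ∈ U} => N U ∩ O'ᶜ) := by
      intro U V
      exact ⟨⟨U.1 ∩ V.1, U.2.1.inter V.2.1, U.2.2, V.2.2⟩,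
        inter_subset_inter_left _ (hNmono _ _ inter_subset_left),
        inter_subset_inter_left _ (hNmono _ _ inter_subset_right)⟩
    obtain ⟨U, hU⟩ := hKc.elim_directed_family_closed
      (fun U : {U : Set E // IsOpen U ∧ x ∈ U} => N U ∩ O'ᶜ)
      (fun U => (hNclosed U).inter hO'open.isClosed_compl) hInter hdir
    refine ⟨N U, hNnhds U, hNcomp U, hNCSet U, ?_⟩
    intro z hz
    have hzO' : z ∈ O' := by
      by_contra hzc
      exact (eq_empty_iff_forall_notMem.mp hU z) ⟨hNsubK U hz, hz, hzc⟩
    exact interior_subset hzO'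
  refine ⟨part1, ?_⟩
  intro O hO
  obtain ⟨N, hNn, hNcomp, ⟨A', B', hA'cl, hA'dec, hB'cl, hB'inc, hNAB⟩, hNO⟩ := part1 O hO
  set M := interior N with hM
  have hxM : x ∈ M := mem_interior_iff_mem_nhds.mpr hNn
  have hclassM : decHull {x} ∩ incHull {x} ⊆ M := hindist M isOpen_interior ⟨x, hxdi, hxM⟩
  set C := N \ M with hC
  have hCcomp : IsCompact C := hNcomp.inter_right isOpen_interior.isClosed_compl
  have hsC : IsCompact (C ∩ incHull {x}) :=
    hCcomp.inter_right (isClosed_incHull hG isCompact_singleton)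
  have htC : IsCompact (C ∩ decHull {x}) :=
    hCcomp.inter_right (isClosed_decHull hG isCompact_singleton)
  have hnot : ∀ z ∈ C ∩ incHull {x}, ∀ w ∈ C ∩ decHull {x}, ¬ z ≤ w := by
    rintro z ⟨hzC, x', hx', hxz⟩ w ⟨hwC, x'', hx'', hwx⟩ hzw
    rw [Set.mem_singleton_iff] at hx' hx''
    rw [hx'] at hxz
    rw [hx''] at hwx
    exact hzC.2 (hclassM ⟨⟨x, rfl, hzw.trans hwx⟩, ⟨x, rfl, hxz⟩⟩)
  obtain ⟨G₁, G₂, hG₁o, hG₂o, hsG₁, htG₂, hG₁₂⟩ := compact_sep hG hsC htC hnot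
  set C₁ := C \ G₁ with hC₁
  set C₂ := C \ G₂ with hC₂
  have hC₁c : IsCompact C₁ := hCcomp.inter_right hG₁o.isClosed_compl
  have hC₂c : IsCompact C₂ := hCcomp.inter_right hG₂o.isClosed_compl
  set W := M \ (decHull C₁ ∪ incHull C₂) with hWdef
  have hWopen : IsOpen W :=
    isOpen_interior.sdiff ((isClosed_decHull hG hC₁c).union (isClosed_incHull hG hC₂c))
  have hxW : x ∈ W := by
    refine ⟨hxM, ?_⟩
    rintro (⟨c, hc, hxc⟩ | ⟨c, hc, hcx⟩)
    · exact hc.2 (hsG₁ ⟨hc.1, ⟨x, rfl, hxc⟩⟩)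
    · exact hc.2 (htG₂ ⟨hc.1, ⟨x, rfl, hcx⟩⟩)
  have hWN : W ⊆ N := fun z hz => interior_subset hz.1
  have hCeq : C ⊆ C₁ ∪ C₂ := by
    intro y hy
    by_cases h1 : y ∈ G₁
    · by_cases h2 : y ∈ G₂
      · exact absurd (show y ∈ G₁ ∩ G₂ from ⟨h1, h2⟩) (by simp [hG₁₂])
      · exact Or.inr ⟨hy, h2⟩
    · exact Or.inl ⟨hy, h1⟩
  have hconv : IsOrdConvex W := by
    refine subset_antisymm ?_ (fun z hz => ⟨⟨z, hz, le_refl z⟩, ⟨z, hz, le_refl z⟩⟩)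
    rintro y ⟨⟨w₁, hw₁W, hyw₁⟩, ⟨w₂, hw₂W, hw₂y⟩⟩
    have hw₁N := hWN hw₁W
    have hw₂N := hWN hw₂W
    have hyA' : y ∈ A' := by
      rw [← hA'dec]
      exact ⟨w₁, (by rw [hNAB] at hw₁N; exact hw₁N.1), hyw₁⟩
    have hyB' : y ∈ B' := by
      rw [← hB'inc]
      exact ⟨w₂, (by rw [hNAB] at hw₂N; exact hw₂N.2), hw₂y⟩
    have hyN : y ∈ N := by rw [hNAB]; exact ⟨hyA', hyB'⟩
    have hynd : y ∉ decHull C₁ := by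
      rintro ⟨c, hc, hyc⟩
      exact hw₂W.2 (Or.inl ⟨c, hc, hw₂y.trans hyc⟩)
    have hyni : y ∉ incHull C₂ := by
      rintro ⟨c, hc, hcy⟩
      exact hw₁W.2 (Or.inr ⟨c, hc, hcy.trans hyw₁⟩)
    have hyM : y ∈ M := by
      by_contra hyM
      rcases hCeq ⟨hyN, hyM⟩ with h | h
      · exact hynd (subset_decHull _ h)
      · exact hyni (subset_incHull _ h)
    exact ⟨hyM, fun hmem => hmem.elim hynd hyni⟩
  exact ⟨W, hWopen.mem_nhds hxW, hWopen, hconv, hWN.trans hNO⟩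
end

section
/- Every locally convex I-space is convex: if E is a topological preordered space such that for every open set S both d(S) and i(S) are open, and the convex neighborhoods of each point form a base of the neighborhood filter at that point, then for every x ∈ E and every open neighborhood O of x there exist an open decreasing set U and an open increasing set V with x ∈ U ∩ V ⊆ O. -/
open Topology

/-- Every locally convex `I`-space is convex. -/
theorem convex_of_locallyConvex_ISpace {E : Type*} [TopologicalSpace E] [Preorder E]
    (hI : ∀ S : Set E, IsOpen S → IsOpen (decHull S) ∧ IsOpen (incHull S))
    (hlc : ∀ x : E, ∀ O ∈ 𝓝 x, ∃ C ∈ 𝓝 x, IsOrdConvex C ∧ C ⊆ O)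
    (x : E) (O : Set E) (hO : IsOpen O) (hxO : x ∈ O) :
    ∃ U V : Set E, IsOpen U ∧ decHull U = U ∧ IsOpen V ∧ incHull V = V ∧
      x ∈ U ∩ V ∧ U ∩ V ⊆ O := by
  obtain ⟨C, hC, hCconv, hCO⟩ := hlc x O (hO.mem_nhds hxO)
  set W := interior C with hW
  have hWopen : IsOpen W := isOpen_interior
  have hxW : x ∈ W := mem_interior_iff_mem_nhds.2 hC
  refine ⟨decHull W, incHull W, (hI W hWopen).1, ?_, (hI W hWopen).2, ?_, ?_, ?_⟩
  · ext y
    constructor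
    · rintro ⟨z, ⟨w, hw, hzw⟩, hyz⟩
      exact ⟨w, hw, hyz.trans hzw⟩
    · intro hy
      exact ⟨y, hy, le_refl y⟩
  · ext y
    constructor
    · rintro ⟨z, ⟨w, hw, hwz⟩, hzy⟩
      exact ⟨w, hw, hwz.trans hzy⟩
    · intro hy
      exact ⟨y, hy, le_refl y⟩
  · exact ⟨⟨x, hxW, le_refl x⟩, ⟨x, hxW, le_refl x⟩⟩
  · rintro y ⟨⟨z, hz, hyz⟩, ⟨w, hw, hwy⟩⟩
    have : y ∈ decHull C ∩ incHull C :=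
      ⟨⟨z, interior_subset hz, hyz⟩, ⟨w, interior_subset hw, hwy⟩⟩
    exact hCO (hCconv ▸ this)
end

section
/- Let E be a compactly generated closed preordered space with reflexive generating relation R, and let K ⊆ E be compact. If x ≤ z with x ∈ Int(K) and z ∉ closure(R(K)), then there exists y ∈ closure(R(K)) \ Int(K) such that x ≤ y ≤ z. -/
/-- The image `R(K) = {y | ∃ x ∈ K, (x,y) ∈ R}` of a set under a relation. -/
def relImage {E : Type*} (R : Set (E × E)) (K : Set E) : Set E :=
  {y | ∃ x ∈ K, (x, y) ∈ R}

/-- In a compactly generated closed preordered space with reflexive generating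
relation `R`, if `x ≤ z`, `x ∈ Int K` and `z ∉ closure (R(K))` for a compact
`K`, then there is `y ∈ closure (R(K)) \ Int K` with `x ≤ y ≤ z`. -/
theorem exists_intermediate_point {E : Type*} [TopologicalSpace E] [Preorder E]
    (hG : IsClosed {p : E × E | p.1 ≤ p.2})
    (R : Set (E × E))
    (hRsub : R ⊆ {p : E × E | p.1 ≤ p.2})
    (hRrefl : ∀ a : E, (a, a) ∈ R)
    (hRk : ∀ K : Set E, IsCompact K → IsCompact (closure (relImage R K)))
    (hmin : ∀ T : Set (E × E), IsClosed T → (∀ a : E, (a, a) ∈ T) →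
      (∀ a b c : E, (a, b) ∈ T → (b, c) ∈ T → (a, c) ∈ T) → R ⊆ T →
      {p : E × E | p.1 ≤ p.2} ⊆ T)
    (K : Set E) (hK : IsCompact K)
    (x z : E) (hxz : x ≤ z)
    (hx : x ∈ interior K) (hz : z ∉ closure (relImage R K)) :
    ∃ y ∈ closure (relImage R K) \ interior K, x ≤ y ∧ y ≤ z := by
  set C := closure (relImage R K) with hC
  have hCcl : IsClosed C := isClosed_closure
  have hCcpt : IsCompact C := hRk K hK
  set D := C \ interior K with hD
  have hDcl : IsClosed D := hCcl.sdiff isOpen_interior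
  have hDcpt : IsCompact D := hCcpt.of_isClosed_subset hDcl Set.diff_subset
  haveI : CompactSpace D := isCompact_iff_compactSpace.mp hDcpt
  set W : Set (↥D × (E × E)) :=
    {p | p.2.1 ≤ (p.1 : E) ∧ (p.1 : E) ≤ p.2.2} with hW
  have hWcl : IsClosed W := by
    have h1 : IsClosed {p : ↥D × (E × E) | p.2.1 ≤ (p.1 : E)} :=
      hG.preimage (by fun_prop : Continuous fun p : ↥D × (E × E) => (p.2.1, (p.1 : E)))
    have h2 : IsClosed {p : ↥D × (E × E) | (p.1 : E) ≤ p.2.2} :=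
      hG.preimage (by fun_prop : Continuous fun p : ↥D × (E × E) => ((p.1 : E), p.2.2))
    exact h1.inter h2
  set S : Set (E × E) := Prod.snd '' W with hS
  have hScl : IsClosed S := isClosedMap_snd_of_compactSpace W hWcl
  set T : Set (E × E) :=
    {p : E × E | p.1 ≤ p.2} ∩ ((interior K)ᶜ ×ˢ Set.univ ∪ Set.univ ×ˢ C ∪ S) with hT
  have hTcl : IsClosed T :=
    hG.inter (((isOpen_interior.isClosed_compl.prod isClosed_univ).union
      (isClosed_univ.prod hCcl)).union hScl)
  -- helper to build membership in S
  have memS : ∀ a b y : E, y ∈ D → a ≤ y → y ≤ b → (a, b) ∈ S := by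
    intro a b y hy h1 h2
    exact ⟨(⟨y, hy⟩, (a, b)), ⟨h1, h2⟩, rfl⟩
  have hTrefl : ∀ a : E, (a, a) ∈ T := by
    intro a
    refine ⟨le_refl a, ?_⟩
    by_cases ha : a ∈ interior K
    · exact Or.inl (Or.inr ⟨Set.mem_univ a, subset_closure ⟨a, interior_subset ha, hRrefl a⟩⟩)
    · exact Or.inl (Or.inl ⟨ha, Set.mem_univ a⟩)
  have hTtrans : ∀ a b c : E, (a, b) ∈ T → (b, c) ∈ T → (a, c) ∈ T := by
    intro a b c hab hbc
    obtain ⟨hab1, hab2⟩ := hab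
    obtain ⟨hbc1, hbc2⟩ := hbc
    refine ⟨le_trans hab1 hbc1, ?_⟩
    by_cases ha : a ∈ interior K
    · rcases hab2 with (⟨ha', -⟩ | ⟨-, hbC⟩) | habS
      · exact absurd ha ha'
      · -- b ∈ C
        by_cases hb : b ∈ interior K
        · rcases hbc2 with (⟨hb', -⟩ | ⟨-, hcC⟩) | hbcS
          · exact absurd hb hb'
          · exact Or.inl (Or.inr ⟨Set.mem_univ a, hcC⟩)
          · obtain ⟨⟨⟨y, hyD⟩, q⟩, ⟨h1, h2⟩, hq⟩ := hbcS
            cases hq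
            exact Or.inr (memS a c y hyD (le_trans hab1 h1) h2)
        · exact Or.inr (memS a c b ⟨hbC, hb⟩ hab1 hbc1)
      · obtain ⟨⟨⟨y, hyD⟩, q⟩, ⟨h1, h2⟩, hq⟩ := habS
        cases hq
        exact Or.inr (memS a c y hyD h1 (le_trans h2 hbc1))
    · exact Or.inl (Or.inl ⟨ha, Set.mem_univ c⟩)
  have hRT : R ⊆ T := by
    intro p hp
    refine ⟨hRsub hp, ?_⟩
    by_cases ha : p.1 ∈ interior K
    · exact Or.inl (Or.inr ⟨Set.mem_univ _, subset_closure ⟨p.1, interior_subset ha, hp⟩⟩)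
    · exact Or.inl (Or.inl ⟨ha, Set.mem_univ _⟩)
  have hxzT : (x, z) ∈ T := hmin T hTcl hTrefl hTtrans hRT hxz
  rcases hxzT.2 with (⟨hx', -⟩ | ⟨-, hzC⟩) | hxzS
  · exact absurd hx hx'
  · exact absurd hzC hz
  · obtain ⟨⟨⟨y, hyD⟩, q⟩, ⟨h1, h2⟩, hq⟩ := hxzS
    cases hq
    exact ⟨y, hyD, h1, h2⟩
end

section
/- Every compactly generated closed ordered space (i.e., compactly generated closed preordered with ≤ antisymmetric) whose topology is locally compact is weakly convex: at every point the open convex neighborhoods form a base of the neighborhood filter. -/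
open Topology

set_option linter.unusedSectionVars false

section Aux

variable {E : Type*} [TopologicalSpace E] [Preorder E]

/-- Tube-lemma style separation of two compact sets avoiding a closed relation. -/
lemma tube_avoid {W : Set (E × E)} (hW : IsClosed W) {s t : Set E}
    (hs : IsCompact s) (ht : IsCompact t)
    (h : ∀ a ∈ s, ∀ b ∈ t, (a, b) ∉ W) :
    ∃ u v : Set E, IsOpen u ∧ IsOpen v ∧ s ⊆ u ∧ t ⊆ v ∧
      ∀ a ∈ u, ∀ b ∈ v, (a, b) ∉ W := by
  have hsub : s ×ˢ t ⊆ Wᶜ := by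
    rintro ⟨a, b⟩ ⟨ha, hb⟩
    exact h a ha b hb
  obtain ⟨u, v, hu, hv, hsu, htv, huv⟩ :=
    generalized_tube_lemma hs ht hW.isOpen_compl hsub
  exact ⟨u, v, hu, hv, hsu, htv, fun a ha b hb hab =>
    huv (Set.mk_mem_prod ha hb) hab⟩

lemma isClosed_incHull_of_compact (hG : IsClosed {p : E × E | p.1 ≤ p.2})
    {K : Set E} (hK : IsCompact K) : IsClosed (incHull K) := by
  rw [← isOpen_compl_iff, isOpen_iff_mem_nhds]
  intro y hy
  obtain ⟨u, v, hu, hv, hKu, hyv, hsep⟩ :=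
    tube_avoid hG hK isCompact_singleton
      (t := {y}) (fun a ha b hb hab => by
        rw [Set.mem_singleton_iff] at hb
        subst hb
        exact hy ⟨a, ha, hab⟩)
  refine Filter.mem_of_superset (hv.mem_nhds (hyv rfl)) ?_
  rintro b hb ⟨a, haK, hab⟩
  exact hsep a (hKu haK) b hb hab

lemma isClosed_decHull_of_compact (hG : IsClosed {p : E × E | p.1 ≤ p.2})
    {K : Set E} (hK : IsCompact K) : IsClosed (decHull K) := by
  have hW : IsClosed {p : E × E | p.2 ≤ p.1} := hG.preimage continuous_swap
  rw [← isOpen_compl_iff, isOpen_iff_mem_nhds]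
  intro y hy
  obtain ⟨u, v, hu, hv, hKu, hyv, hsep⟩ :=
    tube_avoid hW hK isCompact_singleton
      (t := {y}) (fun a ha b hb (hab : b ≤ a) => by
        rw [Set.mem_singleton_iff] at hb
        subst hb
        exact hy ⟨a, ha, hab⟩)
  refine Filter.mem_of_superset (hv.mem_nhds (hyv rfl)) ?_
  rintro b hb ⟨a, haK, hab⟩
  exact hsep a (hKu haK) b hb hab

/-- The set of pairs linked through a compact set `S` is closed. -/
lemma isClosed_linkedThrough (hG : IsClosed {p : E × E | p.1 ≤ p.2})
    {S : Set E} (hS : IsCompact S) :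
    IsClosed {pq : E × E | ∃ w ∈ S, pq.1 ≤ w ∧ w ≤ pq.2} := by
  rw [← isOpen_compl_iff, isOpen_iff_mem_nhds]
  rintro ⟨p, q⟩ hpq
  simp only [Set.mem_compl_iff, Set.mem_setOf_eq, not_exists, not_and] at hpq
  -- for each w in S choose separating open boxes
  have key : ∀ w : E, w ∈ S → ∃ Pw Ww Qw : Set E,
      IsOpen Pw ∧ IsOpen Ww ∧ IsOpen Qw ∧ p ∈ Pw ∧ w ∈ Ww ∧ q ∈ Qw ∧
      ∀ p' ∈ Pw, ∀ w' ∈ Ww, ∀ q' ∈ Qw, ¬ (p' ≤ w' ∧ w' ≤ q') := by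
    intro w hw
    by_cases hpw : p ≤ w
    · have hwq : ¬ w ≤ q := fun h => hpq w hw hpw h
      have : ((w, q) : E × E) ∈ {p : E × E | p.1 ≤ p.2}ᶜ := hwq
      obtain ⟨u, v, hu, hv, hwu, hqv, huv⟩ :=
        isOpen_prod_iff.mp hG.isOpen_compl w q this
      exact ⟨Set.univ, u, v, isOpen_univ, hu, hv, trivial, hwu, hqv,
        fun p' _ w' hw' q' hq' hc => huv (Set.mk_mem_prod hw' hq') hc.2⟩
    · have : ((p, w) : E × E) ∈ {p : E × E | p.1 ≤ p.2}ᶜ := hpw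
      obtain ⟨u, v, hu, hv, hpu, hwv, huv⟩ :=
        isOpen_prod_iff.mp hG.isOpen_compl p w this
      exact ⟨u, v, Set.univ, hu, hv, isOpen_univ, hpu, hwv, trivial,
        fun p' hp' w' hw' q' _ hc => huv (Set.mk_mem_prod hp' hw') hc.1⟩
  choose Pw Ww Qw hPo hWo hQo hpP hwW hqQ hsep using key
  obtain ⟨t, ht⟩ := hS.elim_nhds_subcover' (fun w hw => Ww w hw)
    (fun w hw => (hWo w hw).mem_nhds (hwW w hw))
  have hPopen : IsOpen (⋂ i ∈ t, Pw i.1 i.2) :=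
    isOpen_biInter_finset fun i _ => hPo i.1 i.2
  have hQopen : IsOpen (⋂ i ∈ t, Qw i.1 i.2) :=
    isOpen_biInter_finset fun i _ => hQo i.1 i.2
  rw [mem_nhds_prod_iff]
  refine ⟨⋂ i ∈ t, Pw i.1 i.2, hPopen.mem_nhds (Set.mem_iInter₂.mpr fun i _ => hpP i.1 i.2),
    ⋂ i ∈ t, Qw i.1 i.2, hQopen.mem_nhds (Set.mem_iInter₂.mpr fun i _ => hqQ i.1 i.2), ?_⟩
  rintro ⟨p', q'⟩ ⟨hp', hq'⟩
  rintro ⟨w, hwS, h1, h2⟩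
  obtain ⟨i, hit, hwWi⟩ := Set.mem_iUnion₂.mp (ht hwS)
  exact hsep i.1 i.2 p' (Set.mem_iInter₂.mp hp' i hit) w hwWi q'
    (Set.mem_iInter₂.mp hq' i hit) ⟨h1, h2⟩

end Aux

/-- Every compactly generated closed ordered space whose topology is locally
compact is weakly convex: at every point the open convex neighborhoods form a
base of the neighborhood filter. -/
theorem weaklyConvex_of_compactlyGenerated {E : Type*} [TopologicalSpace E] [Preorder E]
    (hG : IsClosed {p : E × E | p.1 ≤ p.2})
    (hanti : ∀ a b : E, a ≤ b → b ≤ a → a = b)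
    (hcg : ∃ R : Set (E × E), R ⊆ {p : E × E | p.1 ≤ p.2} ∧
      (∀ K : Set E, IsCompact K → IsCompact (closure (relImage R K))) ∧
      (∀ T : Set (E × E), IsClosed T → (∀ a : E, (a, a) ∈ T) →
        (∀ a b c : E, (a, b) ∈ T → (b, c) ∈ T → (a, c) ∈ T) → R ⊆ T →
        {p : E × E | p.1 ≤ p.2} ⊆ T))
    (hloc : ∀ x : E, ∃ K : Set E, IsCompact K ∧ K ∈ 𝓝 x) :
    ∀ x : E, ∀ O ∈ 𝓝 x, ∃ C ∈ 𝓝 x, IsOpen C ∧ IsOrdConvex C ∧ C ⊆ O := by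
  classical
  obtain ⟨R, hRG, hRK, hRmin⟩ := hcg
  -- the space is Hausdorff
  haveI : T2Space E := by
    rw [t2_iff_isClosed_diagonal]
    have hdiag : Set.diagonal E
        = {p : E × E | p.1 ≤ p.2} ∩ {p : E × E | p.2 ≤ p.1} := by
      ext ⟨a, b⟩
      constructor
      · rintro (h : a = b)
        subst h
        exact ⟨le_refl a, le_refl a⟩
      · rintro ⟨h1, h2⟩
        exact (hanti a b h1 h2)
    rw [hdiag]
    exact hG.inter (hG.preimage continuous_swap)
  haveI : WeaklyLocallyCompactSpace E :=
    ⟨fun x => by obtain ⟨K, h1, h2⟩ := hloc x; exact ⟨K, h1, h2⟩⟩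
  haveI : LocallyCompactSpace E := inferInstance
  intro x O hO
  -- basic compact neighborhood data
  obtain ⟨K₀, hK₀c, hK₀n⟩ := hloc x
  set U₀ : Set E := interior K₀ with hU₀def
  have hxU₀ : x ∈ U₀ := mem_interior_iff_mem_nhds.mpr hK₀n
  have hclU₀ : IsCompact (closure U₀) :=
    hK₀c.of_isClosed_subset isClosed_closure
      (closure_minimal interior_subset hK₀c.isClosed)
  set Fh : Set E := closure U₀ ∪ closure (relImage R (closure U₀)) with hFhdef
  have hFhc : IsCompact Fh := hclU₀.union (hRK _ hclU₀)
  have hFhcl : IsClosed Fh := isClosed_closure.union isClosed_closure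
  have hU₀Fh : U₀ ⊆ Fh := fun z hz => Or.inl (subset_closure hz)
  -- middle-sized neighborhood N₁
  obtain ⟨N₁, hN₁n, hN₁sub, hN₁c⟩ :=
    local_compact_nhds (show U₀ ∈ 𝓝 x from isOpen_interior.mem_nhds hxU₀)
  have hxN₁ : x ∈ interior N₁ := mem_interior_iff_mem_nhds.mpr hN₁n
  have hintN₁U₀ : interior N₁ ⊆ U₀ := interior_subset.trans hN₁sub
  set Sh : Set E := Fh \ interior N₁ with hShdef
  have hShc : IsCompact Sh := hFhc.diff isOpen_interior
  -- Intermediate value property via minimality of the preorder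
  have IVP : ∀ p q : E, p ≤ q → p ∈ interior N₁ → q ∉ Fh →
      ∃ w ∈ Sh, p ≤ w ∧ w ≤ q := by
    set M : Set (E × E) := {pq : E × E | ∃ w ∈ Sh, pq.1 ≤ w ∧ w ≤ pq.2} with hMdef
    have hMcl : IsClosed M := isClosed_linkedThrough hG hShc
    set T : Set (E × E) :=
      {pq : E × E | pq.1 = pq.2 ∨ (pq.1 ≤ pq.2 ∧
        (pq.1 ∉ interior N₁ ∨ pq.2 ∈ Fh ∨ pq ∈ M))} with hTdef
    have hTcl : IsClosed T := by
      have hTeq : T = Set.diagonal E ∪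
          ({p : E × E | p.1 ≤ p.2} ∩
            ((((interior N₁)ᶜ ×ˢ (Set.univ : Set E)) ∪
              ((Set.univ : Set E) ×ˢ Fh)) ∪ M)) := by
        ext ⟨p, q⟩
        simp only [hTdef, Set.mem_setOf_eq, Set.mem_union, Set.mem_inter_iff,
          Set.mem_prod, Set.mem_univ, Set.mem_compl_iff, and_true, true_and,
          Set.mem_diagonal_iff]
        tauto
      rw [hTeq]
      refine isClosed_diagonal.union (hG.inter ?_)
      refine (IsClosed.union ?_ ?_).union hMcl
      · exact (isOpen_interior.isClosed_compl).prod isClosed_univ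
      · exact isClosed_univ.prod hFhcl
    have hTrefl : ∀ a : E, (a, a) ∈ T := fun a => Or.inl rfl
    have hTtrans : ∀ a b c : E, (a, b) ∈ T → (b, c) ∈ T → (a, c) ∈ T := by
      intro a b c hab hbc
      rcases hab with heq | ⟨hab, hd1⟩
      · rw [show a = b from heq]; exact hbc
      rcases hbc with heq2 | ⟨hbc, hd2⟩
      · rw [← show b = c from heq2]; exact Or.inr ⟨hab, hd1⟩
      refine Or.inr ⟨hab.trans hbc, ?_⟩
      by_cases haN : a ∈ interior N₁
      · rcases hd1 with h | hbF | ⟨w, hw, h1, h2⟩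
        · exact absurd haN h
        · by_cases hbN : b ∈ interior N₁
          · rcases hd2 with h | hcF | ⟨w, hw, h1, h2⟩
            · exact absurd hbN h
            · exact Or.inr (Or.inl hcF)
            · exact Or.inr (Or.inr ⟨w, hw, hab.trans h1, h2⟩)
          · exact Or.inr (Or.inr ⟨b, ⟨hbF, hbN⟩, hab, hbc⟩)
        · exact Or.inr (Or.inr ⟨w, hw, h1, h2.trans hbc⟩)
      · exact Or.inl haN
    have hRT : R ⊆ T := by
      rintro ⟨p, q⟩ hpq
      refine Or.inr ⟨hRG hpq, ?_⟩
      by_cases hp : p ∈ interior N₁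
      · refine Or.inr (Or.inl (Or.inr (subset_closure ?_)))
        exact ⟨p, subset_closure (hintN₁U₀ hp), hpq⟩
      · exact Or.inl hp
    have hGT := hRmin T hTcl hTrefl hTtrans hRT
    intro p q hpq hpN hqF
    rcases hGT (show ((p, q) : E × E) ∈ {p : E × E | p.1 ≤ p.2} from hpq) with
      heq | ⟨_, hd⟩
    · exfalso
      apply hqF
      rw [← show p = q from heq]
      exact hU₀Fh (hintN₁U₀ hpN)
    rcases hd with h | hqF' | ⟨w, hw, h1, h2⟩
    · exact absurd hpN h
    · exact absurd hqF' hqF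
    · exact ⟨w, hw, h1, h2⟩
  -- FIP argument: a small compact neighborhood whose up-cone avoids the shell below x
  have FIP : ∃ N₂ : Set E, IsCompact N₂ ∧ N₂ ∈ 𝓝 x ∧ N₂ ⊆ interior N₁ ∧
      ∀ z, z ∈ Sh → (∃ a ∈ N₂, a ≤ z) → z ≤ x → False := by
    by_contra hcon
    push_neg at hcon
    have hNE : ∃ N : Set E, IsCompact N ∧ N ∈ 𝓝 x ∧ N ⊆ interior N₁ := by
      obtain ⟨N, hn, hsub, hc⟩ :=
        local_compact_nhds (isOpen_interior.mem_nhds hxN₁)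
      exact ⟨N, hc, hn, hsub⟩
    set ι := {N : Set E // IsCompact N ∧ N ∈ 𝓝 x ∧ N ⊆ interior N₁} with hιdef
    haveI : Nonempty ι := ⟨⟨hNE.choose, hNE.choose_spec⟩⟩
    set Z : ι → Set E := fun N => Sh ∩ incHull N.1 ∩ {z | z ≤ x} with hZdef
    have hZdir : Directed (· ⊇ ·) Z := by
      intro i j
      refine ⟨⟨i.1 ∩ j.1, i.2.1.inter_right j.2.1.isClosed,
        Filter.inter_mem i.2.2.1 j.2.2.1, fun z hz => i.2.2.2 hz.1⟩, ?_, ?_⟩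
      · rintro z ⟨⟨h1, ⟨a, ha, haz⟩⟩, h3⟩
        exact ⟨⟨h1, ⟨a, ha.1, haz⟩⟩, h3⟩
      · rintro z ⟨⟨h1, ⟨a, ha, haz⟩⟩, h3⟩
        exact ⟨⟨h1, ⟨a, ha.2, haz⟩⟩, h3⟩
    have hZne : ∀ i, (Z i).Nonempty := by
      rintro ⟨N, hc, hn, hsub⟩
      obtain ⟨z, hz1, hz2, hz3⟩ := hcon N hc hn hsub
      exact ⟨z, ⟨hz1, hz2⟩, hz3.1⟩
    have hShcl : IsClosed Sh := hFhcl.inter isOpen_interior.isClosed_compl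
    have hdx : IsClosed {z : E | z ≤ x} :=
      hG.preimage ((continuous_id).prodMk continuous_const)
    have hZcl : ∀ i, IsClosed (Z i) :=
      fun i => (hShcl.inter (isClosed_incHull_of_compact hG i.2.1)).inter hdx
    have hZc : ∀ i, IsCompact (Z i) :=
      fun i => (hShc.inter_right (isClosed_incHull_of_compact hG i.2.1)).inter_right hdx
    obtain ⟨z, hz⟩ :=
      IsCompact.nonempty_iInter_of_directed_nonempty_isCompact_isClosed Z hZdir hZne hZc hZcl
    rw [Set.mem_iInter] at hz
    obtain i₀ : ι := ⟨hNE.choose, hNE.choose_spec⟩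
    have hzSh : z ∈ Sh := (hz i₀).1.1
    have hzx : z ≤ x := (hz i₀).2
    have hxz : x ≤ z := by
      have : ((x, z) : E × E) ∈ closure {p : E × E | p.1 ≤ p.2} := by
        rw [mem_closure_iff_nhds]
        intro t ht
        rw [mem_nhds_prod_iff] at ht
        obtain ⟨u, hu, v, hv, huv⟩ := ht
        obtain ⟨N, hNn, hNsub, hNc⟩ :=
          local_compact_nhds (Filter.inter_mem hu (isOpen_interior.mem_nhds hxN₁))
        have hi : z ∈ Z ⟨N, hNc, hNn, fun w hw => (hNsub hw).2⟩ := hz _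
        obtain ⟨a, haN, haz⟩ := hi.1.2
        exact ⟨(a, z), huv (Set.mk_mem_prod (hNsub haN).1 (mem_of_mem_nhds hv)), haz⟩
      rwa [hG.closure_eq] at this
    have : z = x := hanti z x hzx hxz
    rw [this] at hzSh
    exact hzSh.2 hxN₁
  obtain ⟨N₂, hN₂c, hN₂n, hN₂sub, hN₂avoid⟩ := FIP
  -- the open set V with compact order intervals
  set A : Set E := Sh ∩ incHull N₂ with hAdef
  have hAcl : IsClosed (incHull A) :=
    isClosed_incHull_of_compact hG
      (hShc.inter_right (isClosed_incHull_of_compact hG hN₂c))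
  set V : Set E := interior N₂ \ incHull A with hVdef
  have hVo : IsOpen V := isOpen_interior.sdiff hAcl
  have hxV : x ∈ V := by
    refine ⟨mem_interior_iff_mem_nhds.mpr hN₂n, ?_⟩
    rintro ⟨w, hwA, hwx⟩
    exact hN₂avoid w hwA.1 hwA.2 hwx
  have hintN₂N₁ : interior N₂ ⊆ interior N₁ := by
    have h1 : interior N₂ ⊆ interior (interior N₁) := interior_mono hN₂sub
    rwa [interior_interior] at h1
  have hinterval : ∀ a ∈ V, ∀ c ∈ V, ∀ y, a ≤ y → y ≤ c → y ∈ Fh := by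
    intro a ha c hc y hay hyc
    by_contra hyF
    obtain ⟨w, hwS, haw, hwy⟩ := IVP a y hay (hintN₂N₁ ha.1) hyF
    exact hc.2 ⟨w, ⟨hwS, ⟨a, interior_subset ha.1, haw⟩⟩, hwy.trans hyc⟩
  -- compact order-convex set Y around x
  obtain ⟨P, hPn, hPsub, hPc⟩ := local_compact_nhds (hVo.mem_nhds hxV)
  set Y : Set E := incHull P ∩ decHull P with hYdef
  have hYFh : Y ⊆ Fh := by
    rintro z ⟨⟨p, hp, hpz⟩, ⟨p', hp', hzp'⟩⟩
    exact hinterval p (hPsub hp) p' (hPsub hp') z hpz hzp'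
  have hYcl : IsClosed Y :=
    (isClosed_incHull_of_compact hG hPc).inter (isClosed_decHull_of_compact hG hPc)
  have hYc : IsCompact Y := hFhc.of_isClosed_subset hYcl hYFh
  have hPY : P ⊆ Y := fun p hp => ⟨⟨p, hp, le_refl p⟩, ⟨p, hp, le_refl p⟩⟩
  -- Nachbin-type separation inside the compact set Y
  have SEP : ∀ p q : E, ¬ p ≤ q → ∃ As Bs : Set E,
      IsOpen As ∧ IsOpen Bs ∧ p ∈ As ∧ q ∈ Bs ∧
      (∀ a z, a ∈ As → a ≤ z → z ∈ As) ∧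
      (∀ b z, b ∈ Bs → z ≤ b → z ∈ Bs) ∧
      (∀ a, a ∈ As → a ∈ Y → ∀ b, b ∈ Bs → b ∈ Y → ¬ a ≤ b) := by
    intro p q hpq
    have hK₁cl : IsClosed {z : E | p ≤ z} :=
      hG.preimage (continuous_const.prodMk continuous_id)
    have hK₂cl : IsClosed {z : E | z ≤ q} :=
      hG.preimage ((continuous_id).prodMk continuous_const)
    have hK₁c : IsCompact ({z : E | p ≤ z} ∩ Y) := hYc.inter_left hK₁cl
    have hK₂c : IsCompact ({z : E | z ≤ q} ∩ Y) := hYc.inter_left hK₂cl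
    obtain ⟨u, v, hu, hv, hK₁u, hK₂v, hsep⟩ :=
      tube_avoid hG hK₁c hK₂c (fun a ha b hb (hab : a ≤ b) =>
        hpq ((ha.1.trans hab).trans hb.1))
    refine ⟨(decHull (Y \ u))ᶜ, (incHull (Y \ v))ᶜ, ?_, ?_, ?_, ?_, ?_, ?_, ?_⟩
    · exact (isClosed_decHull_of_compact hG (hYc.diff hu)).isOpen_compl
    · exact (isClosed_incHull_of_compact hG (hYc.diff hv)).isOpen_compl
    · rintro ⟨w, ⟨hwY, hwu⟩, hpw⟩
      exact hwu (hK₁u ⟨hpw, hwY⟩)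
    · rintro ⟨w, ⟨hwY, hwv⟩, hwq⟩
      exact hwv (hK₂v ⟨hwq, hwY⟩)
    · rintro a z haA haz ⟨w, hw, hzw⟩
      exact haA ⟨w, hw, haz.trans hzw⟩
    · rintro b z hbB hzb ⟨w, hw, hwz⟩
      exact hbB ⟨w, hw, hwz.trans hzb⟩
    · intro a haA haY b hbB hbY hab
      have hau : a ∈ u := by
        by_contra hau
        exact haA ⟨a, ⟨haY, hau⟩, le_refl a⟩
      have hbv : b ∈ v := by
        by_contra hbv
        exact hbB ⟨b, ⟨hbY, hbv⟩, le_refl b⟩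
      exact hsep a hau b hbv hab
  -- the region to exclude
  set Z₀ : Set E := Y \ (interior O ∩ interior P) with hZ₀def
  have hZ₀c : IsCompact Z₀ := hYc.diff (isOpen_interior.inter isOpen_interior)
  have hxO : x ∈ interior O := mem_interior_iff_mem_nhds.mpr hO
  have hxP : x ∈ interior P := mem_interior_iff_mem_nhds.mpr hPn
  -- per-point separating data
  have key : ∀ y, y ∈ Z₀ → ∃ S T : Set E, IsOpen S ∧ IsOpen T ∧ y ∈ S ∧ x ∈ T ∧
      (∀ a c z, a ∈ T → a ∈ Y → c ∈ T → c ∈ Y → z ∈ Y → a ≤ z → z ≤ c → z ∈ T) ∧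
      (∀ a c z, a ∈ T → a ∈ Y → c ∈ T → c ∈ Y → z ∈ S → z ∈ Y →
        a ≤ z → z ≤ c → False) := by
    rintro y ⟨hyY, hyO⟩
    have hyx : y ≠ x := fun h => hyO (h ▸ ⟨hxO, hxP⟩)
    by_cases hxy : x ≤ y
    · have hyx' : ¬ y ≤ x := fun h => hyx (hanti y x h hxy)
      obtain ⟨As, Bs, hAo, hBo, hyA, hxB, hAinc, hBdec, hcross⟩ := SEP y x hyx'
      refine ⟨As, Bs, hAo, hBo, hyA, hxB, ?_, ?_⟩
      · intro a c z _ _ hcT hcY hzY _ hzc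
        exact hBdec c z hcT hzc
      · intro a c z _ _ hcT hcY hzS hzY _ hzc
        exact hcross z hzS hzY c hcT hcY hzc
    · obtain ⟨As, Bs, hAo, hBo, hxA, hyB, hAinc, hBdec, hcross⟩ := SEP x y hxy
      refine ⟨Bs, As, hBo, hAo, hyB, hxA, ?_, ?_⟩
      · intro a c z haT haY _ _ hzY haz _
        exact hAinc a z haT haz
      · intro a c z haT haY _ _ hzS hzY haz _
        exact hcross a haT haY z hzS hzY haz
  choose S T hSo hTo hyS hxT Hmono Htrap using key
  obtain ⟨t, ht⟩ := hZ₀c.elim_nhds_subcover' (fun y hy => S y hy)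
    (fun y hy => (hSo y hy).mem_nhds (hyS y hy))
  set C : Set E := (interior O ∩ interior P) ∩ ⋂ i ∈ t, T i.1 i.2 with hCdef
  have hCo : IsOpen C :=
    (isOpen_interior.inter isOpen_interior).inter
      (isOpen_biInter_finset fun i _ => hTo i.1 i.2)
  have hxC : x ∈ C :=
    ⟨⟨hxO, hxP⟩, Set.mem_iInter₂.mpr fun i _ => hxT i.1 i.2⟩
  have hCP : C ⊆ interior P := fun z hz => hz.1.2
  have hCY : C ⊆ Y := fun z hz => hPY (interior_subset (hCP hz))
  refine ⟨C, hCo.mem_nhds hxC, hCo, ?_, fun z hz => interior_subset hz.1.1⟩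
  -- convexity
  apply Set.Subset.antisymm
  · rintro z ⟨⟨c, hcC, hzc⟩, ⟨a, haC, haz⟩⟩
    have haY : a ∈ Y := hCY haC
    have hcY : c ∈ Y := hCY hcC
    have hzY : z ∈ Y := by
      obtain ⟨⟨p1, hp1, hp1a⟩, _⟩ := haY
      obtain ⟨_, ⟨p2, hp2, hcp2⟩⟩ := hcY
      exact ⟨⟨p1, hp1, hp1a.trans haz⟩, ⟨p2, hp2, hzc.trans hcp2⟩⟩
    have hzO : z ∈ interior O ∩ interior P := by
      by_contra hzO
      have hzZ₀ : z ∈ Z₀ := ⟨hzY, hzO⟩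
      obtain ⟨i, hit, hziS⟩ := Set.mem_iUnion₂.mp (ht hzZ₀)
      exact Htrap i.1 i.2 a c z (Set.mem_iInter₂.mp haC.2 i hit) haY
        (Set.mem_iInter₂.mp hcC.2 i hit) hcY hziS hzY haz hzc
    refine ⟨hzO, Set.mem_iInter₂.mpr fun i hit => ?_⟩
    exact Hmono i.1 i.2 a c z (Set.mem_iInter₂.mp haC.2 i hit) haY
      (Set.mem_iInter₂.mp hcC.2 i hit) hcY hzY haz hzc
  · intro z hz
    exact ⟨⟨z, hz, le_refl z⟩, ⟨z, hz, le_refl z⟩⟩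
end

section
/- Every compactly generated closed ordered space (compactly generated closed preordered with ≤ antisymmetric) whose topology is locally compact and σ-compact is convex and normally ordered. -/
open Topology

section Aux

set_option linter.unusedSectionVars false
set_option linter.unusedVariables false
set_option maxHeartbeats 1000000

open Set

def rHull {E : Type*} (r : E → E → Prop) (S : Set E) : Set E := {y | ∃ x ∈ S, r x y}

variable {E : Type*} [TopologicalSpace E] [Preorder E]

theorem rHull_closed_of_compact {r : E → E → Prop}
    (hrc : IsClosed {p : E × E | r p.1 p.2}) {K : Set E} (hK : IsCompact K) :
    IsClosed (rHull r K) := by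
  rw [← isOpen_compl_iff, isOpen_iff_forall_mem_open]
  intro y hy
  have h1 : ∀ k : K, ∃ u v : Set E, IsOpen u ∧ IsOpen v ∧ (k : E) ∈ u ∧ y ∈ v ∧
      ∀ a ∈ u, ∀ b ∈ v, ¬ r a b := by
    rintro ⟨k, hk⟩
    have hky : (k, y) ∈ {p : E × E | r p.1 p.2}ᶜ := fun h => hy ⟨k, hk, h⟩
    obtain ⟨u, v, hu, hv, hku, hyv, hsub⟩ := isOpen_prod_iff.1 hrc.isOpen_compl k y hky
    exact ⟨u, v, hu, hv, hku, hyv, fun a ha b hb h => hsub (Set.mk_mem_prod ha hb) h⟩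
  choose u v hu hv hku hyv hne using h1
  obtain ⟨t, ht⟩ := hK.elim_finite_subcover u hu
    (fun k hk => mem_iUnion.2 ⟨⟨k, hk⟩, hku ⟨k, hk⟩⟩)
  refine ⟨⋂ k ∈ t, v k, ?_, isOpen_biInter_finset (fun k _ => hv k),
    mem_iInter₂.2 fun k _ => hyv k⟩
  intro z hz hmem
  obtain ⟨k, hk, hr⟩ := hmem
  obtain ⟨k', hk't, hk'⟩ := mem_iUnion₂.1 (ht hk)
  exact hne k' k hk' z (mem_iInter₂.1 hz k' hk't) hr


theorem crossSet_closed (hG : IsClosed {p : E × E | p.1 ≤ p.2})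
    {Z : Set E} (hZ : IsCompact Z) :
    IsClosed {p : E × E | ∃ z ∈ Z, p.1 ≤ z ∧ z ≤ p.2} := by
  rw [← isOpen_compl_iff, isOpen_iff_forall_mem_open]
  rintro ⟨a, b⟩ hab
  have h1 : ∀ z : Z, ∃ N M w : Set E, IsOpen N ∧ IsOpen M ∧ IsOpen w ∧
      a ∈ N ∧ b ∈ M ∧ (z : E) ∈ w ∧
      ∀ a' ∈ N, ∀ b' ∈ M, ∀ z' ∈ w, ¬ (a' ≤ z' ∧ z' ≤ b') := by
    rintro ⟨z, hz⟩
    by_cases haz : a ≤ z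
    · have hzb : ¬ z ≤ b := fun h => hab ⟨z, hz, haz, h⟩
      obtain ⟨w, v, hw, hv, hzw, hbv, hsub⟩ :=
        isOpen_prod_iff.1 hG.isOpen_compl z b hzb
      exact ⟨univ, v, w, isOpen_univ, hv, hw, mem_univ a, hbv, hzw,
        fun a' _ b' hb' z' hz' h => hsub (Set.mk_mem_prod hz' hb') h.2⟩
    · obtain ⟨u, w, hu, hw, hau, hzw, hsub⟩ :=
        isOpen_prod_iff.1 hG.isOpen_compl a z haz
      exact ⟨u, univ, w, hu, isOpen_univ, hw, hau, mem_univ b, hzw,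
        fun a' ha' b' _ z' hz' h => hsub (Set.mk_mem_prod ha' hz') h.1⟩
  choose N M w hN hM hw haN hbM hzw hne using h1
  obtain ⟨t, ht⟩ := hZ.elim_finite_subcover w hw
    (fun z hz => mem_iUnion.2 ⟨⟨z, hz⟩, hzw ⟨z, hz⟩⟩)
  refine ⟨(⋂ k ∈ t, N k) ×ˢ (⋂ k ∈ t, M k), ?_, ?_, ?_⟩
  · rintro ⟨a', b'⟩ ⟨ha', hb'⟩ ⟨z', hz', h1', h2'⟩
    obtain ⟨k, hkt, hk⟩ := mem_iUnion₂.1 (ht hz')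
    exact hne k a' (mem_iInter₂.1 ha' k hkt) b' (mem_iInter₂.1 hb' k hkt) z' hk ⟨h1', h2'⟩
  · exact (isOpen_biInter_finset fun k _ => hN k).prod
      (isOpen_biInter_finset fun k _ => hM k)
  · exact ⟨mem_iInter₂.2 fun k _ => haN k, mem_iInter₂.2 fun k _ => hbM k⟩

theorem tube_sep {F : Set (E × E)} (hF : IsClosed F) {K₁ K₂ : Set E}
    (hK₁ : IsCompact K₁) (hK₂ : IsCompact K₂)
    (hdisj : ∀ q ∈ K₁, ∀ p ∈ K₂, (q, p) ∉ F) :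
    ∃ O₁ O₂ : Set E, IsOpen O₁ ∧ IsOpen O₂ ∧ K₁ ⊆ O₁ ∧ K₂ ⊆ O₂ ∧
      ∀ q ∈ O₁, ∀ p ∈ O₂, (q, p) ∉ F := by
  have h1 : ∀ q : K₁, ∃ u V : Set E, IsOpen u ∧ IsOpen V ∧ (q : E) ∈ u ∧ K₂ ⊆ V ∧
      ∀ a ∈ u, ∀ b ∈ V, (a, b) ∉ F := by
    rintro ⟨q, hq⟩
    have h2 : ∀ p : K₂, ∃ u v : Set E, IsOpen u ∧ IsOpen v ∧ q ∈ u ∧ (p : E) ∈ v ∧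
        ∀ a ∈ u, ∀ b ∈ v, (a, b) ∉ F := by
      rintro ⟨p, hp⟩
      obtain ⟨u, v, hu, hv, hqu, hpv, hsub⟩ :=
        isOpen_prod_iff.1 hF.isOpen_compl q p (hdisj q hq p hp)
      exact ⟨u, v, hu, hv, hqu, hpv, fun a ha b hb h => hsub (Set.mk_mem_prod ha hb) h⟩
    choose u v hu hv hqu hpv hne using h2
    obtain ⟨t, ht⟩ := hK₂.elim_finite_subcover v hv
      (fun p hp => mem_iUnion.2 ⟨⟨p, hp⟩, hpv ⟨p, hp⟩⟩)
    refine ⟨⋂ p ∈ t, u p, ⋃ p ∈ t, v p, isOpen_biInter_finset fun p _ => hu p,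
      isOpen_biUnion fun p _ => hv p, mem_iInter₂.2 fun p _ => hqu p, ht, ?_⟩
    intro a ha b hb
    obtain ⟨p, hpt, hp⟩ := mem_iUnion₂.1 hb
    exact hne p a (mem_iInter₂.1 ha p hpt) b hp
  choose u V hu hV hqu hKV hne using h1
  obtain ⟨t, ht⟩ := hK₁.elim_finite_subcover u hu
    (fun q hq => mem_iUnion.2 ⟨⟨q, hq⟩, hqu ⟨q, hq⟩⟩)
  refine ⟨⋃ q ∈ t, u q, ⋂ q ∈ t, V q, isOpen_biUnion fun q _ => hu q,
    isOpen_biInter_finset fun q _ => hV q, ht,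
    subset_iInter₂ fun q _ => hKV q, ?_⟩
  intro a ha b hb
  obtain ⟨q, hqt, hq⟩ := mem_iUnion₂.1 ha
  exact hne q a hq b (mem_iInter₂.1 hb q hqt)


theorem t2_of_closedOrder (hG : IsClosed {p : E × E | p.1 ≤ p.2})
    (hanti : ∀ a b : E, a ≤ b → b ≤ a → a = b) : T2Space E := by
  constructor
  intro x y hxy
  have h : ¬ x ≤ y ∨ ¬ y ≤ x := by
    by_contra h
    push_neg at h
    exact hxy (hanti x y h.1 h.2)
  rcases h with h | h
  · obtain ⟨u, v, hu, hv, hxu, hyv, hsub⟩ := isOpen_prod_iff.1 hG.isOpen_compl x y h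
    refine ⟨u, v, hu, hv, hxu, hyv, Set.disjoint_left.2 fun z hzu hzv => ?_⟩
    exact hsub (Set.mk_mem_prod hzu hzv) (le_refl z)
  · obtain ⟨v, u, hv, hu, hyv, hxu, hsub⟩ := isOpen_prod_iff.1 hG.isOpen_compl y x h
    refine ⟨u, v, hu, hv, hxu, hyv, Set.disjoint_left.2 fun z hzu hzv => ?_⟩
    exact hsub (Set.mk_mem_prod hzv hzu) (le_refl z)

theorem exists_exhaustion [LocallyCompactSpace E]
    {R : Set (E × E)} (hR : ∀ K : Set E, IsCompact K → IsCompact (closure (relImage R K)))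
    {Kσ : ℕ → Set E} (hKσ : ∀ n, IsCompact (Kσ n))
    {S₀ : Set E} (hS₀ : IsCompact S₀) :
    ∃ D : ℕ → Set E, (∀ n, IsCompact (D n)) ∧ (∀ n, D n ⊆ interior (D (n + 1))) ∧
      (∀ n, closure (relImage R (D n)) ⊆ interior (D (n + 1))) ∧
      (∀ n, Kσ n ⊆ interior (D (n + 1))) ∧ S₀ ⊆ D 0 := by
  have hstep : ∀ (n : ℕ) (L : Set E), IsCompact L → ∃ L' : Set E, IsCompact L' ∧
      (L ∪ closure (relImage R L) ∪ Kσ n) ⊆ interior L' := by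
    intro n L hL
    obtain ⟨L', hL', hsub, _⟩ := exists_compact_between
      ((hL.union (hR L hL)).union (hKσ n)) isOpen_univ (subset_univ _)
    exact ⟨L', hL', hsub⟩
  let g : ℕ → {S : Set E // IsCompact S} := fun n => Nat.rec ⟨S₀, hS₀⟩
    (fun n p => ⟨(hstep n p.1 p.2).choose, (hstep n p.1 p.2).choose_spec.1⟩) n
  have hg : ∀ n, ((g n).1 ∪ closure (relImage R (g n).1) ∪ Kσ n) ⊆ interior (g (n+1)).1 :=
    fun n => (hstep n (g n).1 (g n).2).choose_spec.2
  refine ⟨fun n => (g n).1, fun n => (g n).2, ?_, ?_, ?_, subset_rfl⟩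
  · exact fun n => (subset_union_left.trans subset_union_left).trans (hg n)
  · exact fun n => (subset_union_right.trans (by exact fun x hx => Or.inl hx)).trans (hg n)
  · exact fun n => subset_union_right.trans (hg n)

theorem exh_mono {D : ℕ → Set E} (hmono : ∀ n, D n ⊆ interior (D (n + 1))) :
    ∀ {m n : ℕ}, m ≤ n → D m ⊆ D n := by
  intro m n h
  induction n with
  | zero => simpa [Nat.le_zero.1 h] using subset_rfl
  | succ k ih =>
    rcases Nat.lt_or_ge m (k+1) with h' | h'
    · exact (ih (Nat.lt_succ_iff.1 h')).trans ((hmono k).trans interior_subset)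
    · have : m = k + 1 := le_antisymm h h'
      simp [this]

theorem exh_int {D : ℕ → Set E} (hmono : ∀ n, D n ⊆ interior (D (n + 1))) :
    ∀ {m n : ℕ}, m < n → D m ⊆ interior (D n) := by
  intro m n h
  obtain ⟨k, rfl⟩ : ∃ k, n = k + 1 := ⟨n - 1, by omega⟩
  exact (exh_mono hmono (by omega)).trans (hmono k)

theorem exh_absorb {D : ℕ → Set E} (hmono : ∀ n, D n ⊆ interior (D (n + 1)))
    (hcov : (⋃ n, D n) = univ) {S : Set E} (hS : IsCompact S) :
    ∃ m, S ⊆ interior (D m) := by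
  obtain ⟨t, ht⟩ := hS.elim_finite_subcover (fun n => interior (D (n+1)))
    (fun n => isOpen_interior)
    (by
      intro x _
      have : x ∈ ⋃ n, D n := by rw [hcov]; exact mem_univ x
      obtain ⟨n, hn⟩ := mem_iUnion.1 this
      exact mem_iUnion.2 ⟨n, (hmono n) hn⟩)
  refine ⟨t.sup id + 1, ?_⟩
  intro x hx
  obtain ⟨n, hnt, hn⟩ := mem_iUnion₂.1 (ht hx)
  have hle : n + 1 ≤ t.sup id + 1 := by
    have := Finset.le_sup (f := id) hnt
    simp only [id] at this
    omega
  exact interior_mono (exh_mono hmono hle) hn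


theorem crossing [T2Space E]
    (hG : IsClosed {p : E × E | p.1 ≤ p.2})
    {R : Set (E × E)} (hR1 : R ⊆ {p : E × E | p.1 ≤ p.2})
    (hmin : ∀ T : Set (E × E), IsClosed T → (∀ a : E, (a, a) ∈ T) →
      (∀ a b c : E, (a, b) ∈ T → (b, c) ∈ T → (a, c) ∈ T) → R ⊆ T →
      {p : E × E | p.1 ≤ p.2} ⊆ T)
    {D : ℕ → Set E} (hcpt : ∀ n, IsCompact (D n))
    (hmono : ∀ n, D n ⊆ interior (D (n + 1)))
    (hRD : ∀ n, closure (relImage R (D n)) ⊆ interior (D (n + 1))) :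
    ∀ a b : E, a ≤ b → ∀ m, a ∈ interior (D m) → b ∉ D (m + 1) →
      ∃ z, z ∈ D (m + 1) ∧ z ∉ interior (D m) ∧ a ≤ z ∧ z ≤ b := by
  set W : ℕ → Set (E × E) := fun m =>
    {p : E × E | ∃ z ∈ D (m+1) ∩ (interior (D m))ᶜ, p.1 ≤ z ∧ z ≤ p.2} with hW
  set T : Set (E × E) := {p : E × E | p.1 ≤ p.2} ∩
    ⋂ m, (((interior (D m))ᶜ ×ˢ (univ : Set E)) ∪ ((univ : Set E) ×ˢ D (m+1)) ∪ W m)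
    with hT
  have hAnn : ∀ m, IsCompact (D (m+1) ∩ (interior (D m))ᶜ) :=
    fun m => (hcpt (m+1)).inter_right isOpen_interior.isClosed_compl
  have hTclosed : IsClosed T := by
    refine hG.inter (isClosed_iInter fun m => ?_)
    refine ((IsClosed.prod isOpen_interior.isClosed_compl isClosed_univ).union
      (isClosed_univ.prod (hcpt (m+1)).isClosed)).union
      (crossSet_closed hG (hAnn m))
  have hTrefl : ∀ a : E, (a, a) ∈ T := by
    intro a
    refine ⟨le_refl a, mem_iInter.2 fun m => ?_⟩
    by_cases h : a ∈ interior (D m)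
    · exact Or.inl (Or.inr ⟨mem_univ a, (interior_subset.trans
        ((hmono m).trans interior_subset)) h⟩)
    · exact Or.inl (Or.inl ⟨h, mem_univ a⟩)
  have hTtrans : ∀ a b c : E, (a, b) ∈ T → (b, c) ∈ T → (a, c) ∈ T := by
    rintro a b c ⟨hab, h1⟩ ⟨hbc, h2⟩
    refine ⟨le_trans hab hbc, mem_iInter.2 fun m => ?_⟩
    by_cases ha : a ∈ interior (D m)
    · by_cases hc : c ∈ D (m+1)
      · exact Or.inl (Or.inr ⟨mem_univ a, hc⟩)
      · -- need cross witness
        refine Or.inr ?_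
        have h1m := mem_iInter.1 h1 m
        have h2m := mem_iInter.1 h2 m
        rcases h1m with (⟨ha', _⟩ | ⟨_, hb⟩) | ⟨z, hz, h3, h4⟩
        · exact absurd ha ha'
        · -- b ∈ D (m+1)
          by_cases hbi : b ∈ interior (D m)
          · rcases h2m with (⟨hb', _⟩ | ⟨_, hc'⟩) | ⟨z, hz, h3, h4⟩
            · exact absurd hbi hb'
            · exact absurd hc' hc
            · exact ⟨z, hz, le_trans hab h3, h4⟩
          · exact ⟨b, ⟨hb, hbi⟩, hab, hbc⟩
        · exact ⟨z, hz, h3, le_trans h4 hbc⟩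
    · exact Or.inl (Or.inl ⟨ha, mem_univ a⟩)
  have hTR : R ⊆ T := by
    intro p hp
    refine ⟨hR1 hp, mem_iInter.2 fun m => ?_⟩
    by_cases ha : p.1 ∈ interior (D m)
    · refine Or.inl (Or.inr ⟨mem_univ _, ?_⟩)
      have : p.2 ∈ relImage R (D m) := ⟨p.1, interior_subset ha, by simpa using hp⟩
      exact interior_subset (hRD m (subset_closure this))
    · exact Or.inl (Or.inl ⟨ha, mem_univ _⟩)
  have hsub := hmin T hTclosed hTrefl hTtrans hTR
  intro a b hab m ham hbm
  have := (hsub (show ((a,b) : E × E) ∈ {p : E × E | p.1 ≤ p.2} from hab)).2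
  have hm := mem_iInter.1 this m
  rcases hm with (⟨ha', _⟩ | ⟨_, hb'⟩) | ⟨z, hz, h3, h4⟩
  · exact absurd ham ha'
  · exact absurd hb' hbm
  · exact ⟨z, hz.1, hz.2, h3, h4⟩


/-- L7: monotone shrink inside an open set, relative to a compact K. -/
theorem trace_shrink {r : E → E → Prop} (hrefl : ∀ a : E, r a a)
    (htrans : ∀ a b c : E, r a b → r b c → r a c)
    (hrc : IsClosed {p : E × E | r p.1 p.2}) {K A G₀ : Set E}
    (hK : IsCompact K) (hAK : A ⊆ K)
    (hsat : ∀ z ∈ K, ∀ a ∈ A, r z a → z ∈ A) (hG₀ : IsOpen G₀) (hAG : A ⊆ G₀) :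
    ∃ W : Set E, IsOpen W ∧ A ⊆ W ∩ K ∧ W ∩ K ⊆ G₀ ∧
      (∀ z ∈ K, ∀ u ∈ W ∩ K, r z u → z ∈ W ∩ K) := by
  have hF : IsCompact (K ∩ G₀ᶜ) := hK.inter_right hG₀.isClosed_compl
  set H := rHull r (K ∩ G₀ᶜ) with hH
  have hHc : IsClosed H := rHull_closed_of_compact hrc hF
  refine ⟨Hᶜ, hHc.isOpen_compl, ?_, ?_, ?_⟩
  · intro a ha
    refine ⟨fun hmem => ?_, hAK ha⟩
    obtain ⟨f, ⟨hfK, hfG⟩, hfa⟩ := hmem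
    exact hfG (hAG (hsat f hfK a ha hfa))
  · rintro u ⟨hu, huK⟩
    by_contra hug
    exact hu ⟨u, ⟨huK, hug⟩, hrefl u⟩
  · rintro z hzK u ⟨hu, huK⟩ hzu
    refine ⟨fun hmem => ?_, hzK⟩
    obtain ⟨f, hf, hfz⟩ := hmem
    exact hu ⟨f, hf, htrans f z u hfz hzu⟩

/-- L5: interval localization. -/
theorem interval_localize [T2Space E]
    (hG : IsClosed {p : E × E | p.1 ≤ p.2})
    {R : Set (E × E)} (hR1 : R ⊆ {p : E × E | p.1 ≤ p.2})
    (hmin : ∀ T : Set (E × E), IsClosed T → (∀ a : E, (a, a) ∈ T) →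
      (∀ a b c : E, (a, b) ∈ T → (b, c) ∈ T → (a, c) ∈ T) → R ⊆ T →
      {p : E × E | p.1 ≤ p.2} ⊆ T)
    {D : ℕ → Set E} (hcpt : ∀ n, IsCompact (D n))
    (hmono : ∀ n, D n ⊆ interior (D (n + 1)))
    (hRD : ∀ n, closure (relImage R (D n)) ⊆ interior (D (n + 1)))
    (hcov : (⋃ n, D n) = univ)
    {B A : Set E} (hB : IsCompact B) (hA : IsCompact A) {J₀ : ℕ}
    (hbound : ∀ q ∈ B, ∀ p ∈ A, ∀ v, q ≤ v → v ≤ p → v ∈ D J₀) :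
    ∃ (V₀ U₀ : Set E) (J' : ℕ), IsOpen V₀ ∧ IsOpen U₀ ∧ B ⊆ V₀ ∧ A ⊆ U₀ ∧
      ∀ q ∈ V₀, ∀ p ∈ U₀, ∀ v, q ≤ v → v ≤ p → v ∈ D J' := by
  obtain ⟨M, hM⟩ := exh_absorb hmono hcov (hB.union hA)
  set J₁ := max M J₀ + 1 with hJ₁
  set CB := {p : E × E | ∃ z ∈ D (J₁+1) ∩ (interior (D J₁))ᶜ, p.1 ≤ z ∧ z ≤ p.2} with hCB
  have hCBc : IsClosed CB :=
    crossSet_closed hG ((hcpt (J₁+1)).inter_right isOpen_interior.isClosed_compl)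
  have hdisj : ∀ q ∈ B, ∀ p ∈ A, (q, p) ∉ CB := by
    rintro q hq p hp ⟨z, ⟨hz1, hz2⟩, hqz, hzp⟩
    exact hz2 (exh_int hmono (by omega) (hbound q hq p hp z hqz hzp))
  obtain ⟨O₁, O₂, hO₁, hO₂, hBO, hAO, hOd⟩ := tube_sep hCBc hB hA hdisj
  refine ⟨O₁ ∩ interior (D M), O₂, J₁ + 1, hO₁.inter isOpen_interior, hO₂,
    fun q hq => ⟨hBO hq, hM (Or.inl hq)⟩, hAO, ?_⟩
  rintro q ⟨hqO, hqM⟩ p hp v hqv hvp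
  by_contra hv
  have hqJ : q ∈ interior (D J₁) :=
    (interior_subset.trans (exh_int hmono (by omega))) hqM
  obtain ⟨z, hz1, hz2, hz3, hz4⟩ := crossing hG hR1 hmin hcpt hmono hRD q v hqv J₁ hqJ hv
  exact hOd q hqO p hp ⟨z, ⟨hz1, hz2⟩, hz3, le_trans hz4 hvp⟩


/-- flipped order relation is closed -/
theorem flip_closed (hG : IsClosed {p : E × E | p.1 ≤ p.2}) :
    IsClosed {p : E × E | p.2 ≤ p.1} :=
  hG.preimage (continuous_swap : Continuous (Prod.swap : E × E → E × E))

def NormInv (A B : Set E) (U V : Set E) : Prop :=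
  ∀ q p : E, q ∈ closure V ∪ B → p ∈ closure U ∪ A → ¬ q ≤ p

def NormStep (A B : Set E) (D : ℕ → Set E) (n : ℕ) (U V U' V' : Set E) : Prop :=
  U ⊆ U' ∧ V ⊆ V' ∧ A ∩ D n ⊆ U' ∧ B ∩ D n ⊆ V' ∧
  (∀ z, z ∈ interior (D (n+1)) → (∃ p ∈ closure U ∪ (A ∩ D (n+1)), z ≤ p) → z ∈ U') ∧
  (∀ z, z ∈ interior (D (n+1)) → (∃ q ∈ closure V ∪ (B ∩ D (n+1)), q ≤ z) → z ∈ V')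

theorem norm_step [T2Space E] [LocallyCompactSpace E]
    (hG : IsClosed {p : E × E | p.1 ≤ p.2})
    {A B : Set E} (hA : IsClosed A) (hAd : decHull A = A)
    (hB : IsClosed B) (hBi : incHull B = B) (hAB : A ∩ B = ∅)
    {D : ℕ → Set E} (hcpt : ∀ n, IsCompact (D n))
    (hmono : ∀ n, D n ⊆ interior (D (n + 1)))
    (n : ℕ) (U V : Set E) (hUo : IsOpen U) (hVo : IsOpen V)
    (hUs : U ⊆ interior (D (n+1))) (hVs : V ⊆ interior (D (n+1)))
    (hsep : NormInv A B U V) :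
    ∃ U' V' : Set E, IsOpen U' ∧ IsOpen V' ∧ U' ⊆ interior (D (n+2)) ∧
      V' ⊆ interior (D (n+2)) ∧ NormInv A B U' V' ∧ NormStep A B D n U V U' V' := by
  have hdec_closed : IsClosed {p : E × E | p.2 ≤ p.1} := flip_closed hG
  -- basic compacta
  have hclU : closure U ⊆ D (n+1) :=
    closure_minimal (hUs.trans interior_subset) (hcpt (n+1)).isClosed
  have hclV : closure V ⊆ D (n+1) :=
    closure_minimal (hVs.trans interior_subset) (hcpt (n+1)).isClosed
  set Acl := closure U ∪ (A ∩ D (n+1)) with hAcl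
  set Bcl := closure V ∪ (B ∩ D (n+1)) with hBcl
  have hAclc : IsCompact Acl :=
    ((hcpt (n+1)).of_isClosed_subset isClosed_closure hclU).union
      ((hcpt (n+1)).inter_left hA)
  have hBclc : IsCompact Bcl :=
    ((hcpt (n+1)).of_isClosed_subset isClosed_closure hclV).union
      ((hcpt (n+1)).inter_left hB)
  have hAclK : Acl ⊆ D (n+2) := by
    rw [hAcl]
    refine union_subset (hclU.trans ?_) ((inter_subset_right).trans ?_) <;>
      exact (hmono (n+1)).trans interior_subset
  have hBclK : Bcl ⊆ D (n+2) := by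
    rw [hBcl]
    refine union_subset (hclV.trans ?_) ((inter_subset_right).trans ?_) <;>
      exact (hmono (n+1)).trans interior_subset
  set Astar := decHull Acl ∩ D (n+2) with hAstar
  set Bstar := incHull Bcl ∩ D (n+2) with hBstar
  have hAstarc : IsCompact Astar :=
    (hcpt (n+2)).inter_left (rHull_closed_of_compact hdec_closed hAclc)
  have hBstarc : IsCompact Bstar :=
    (hcpt (n+2)).inter_left (rHull_closed_of_compact hG hBclc)
  -- the key separation fact from the invariant
  have hsep' : ∀ q ∈ Bcl, ∀ p ∈ Acl, ¬ q ≤ p := by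
    intro q hq p hp
    refine hsep q p ?_ ?_
    · rcases hq with h | h; exacts [Or.inl h, Or.inr h.1]
    · rcases hp with h | h; exacts [Or.inl h, Or.inr h.1]
  have hBdA : ∀ w ∈ Bstar, w ∉ decHull Astar := by
    rintro w ⟨⟨q, hq, hqw⟩, hwK⟩ ⟨a, ⟨⟨p, hp, hap⟩, haK⟩, hwa⟩
    exact hsep' q hq p hp (hqw.trans (hwa.trans hap))
  -- choose G_V
  have hdAc : IsClosed (decHull Astar) := rHull_closed_of_compact hdec_closed hAstarc
  obtain ⟨LV, hLV, hBLV, hLVsub⟩ := exists_compact_between hBstarc hdAc.isOpen_compl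
    (fun w hw => hBdA w hw)
  set GV := interior LV with hGV
  have hclGV : closure GV ⊆ LV := closure_minimal interior_subset hLV.isClosed
  have hclGVc : IsCompact (closure GV) := hLV.of_isClosed_subset isClosed_closure hclGV
  have hclGVdA : ∀ g ∈ closure GV, g ∉ decHull Astar := fun g hg => hLVsub (hclGV hg)
  -- choose G_U
  have hiGVc : IsClosed (incHull (closure GV)) := rHull_closed_of_compact hG hclGVc
  have hAiGV : ∀ a ∈ Astar, a ∉ incHull (closure GV) := by
    rintro a ha ⟨g, hg, hga⟩
    exact hclGVdA g hg ⟨a, ha, hga⟩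
  obtain ⟨LU, hLU, hALU, hLUsub⟩ := exists_compact_between hAstarc hiGVc.isOpen_compl
    (fun a ha => hAiGV a ha)
  set GU := interior LU with hGU
  have hclGU : closure GU ⊆ LU := closure_minimal interior_subset hLU.isClosed
  have hstrong : ∀ q ∈ closure GV, ∀ p ∈ closure GU, ¬ q ≤ p := by
    intro q hq p hp hqp
    exact hLUsub (hclGU hp) ⟨q, hq, hqp⟩
  -- trace shrinks
  have hsatU : ∀ z ∈ D (n+2), ∀ a ∈ Astar, z ≤ a → z ∈ Astar := by
    rintro z hz a ⟨⟨p, hp, hap⟩, _⟩ hza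
    exact ⟨⟨p, hp, hza.trans hap⟩, hz⟩
  have hsatV : ∀ z ∈ D (n+2), ∀ b ∈ Bstar, b ≤ z → z ∈ Bstar := by
    rintro z hz b ⟨⟨q, hq, hqb⟩, _⟩ hbz
    exact ⟨⟨q, hq, hqb.trans hbz⟩, hz⟩
  obtain ⟨Wu, hWuo, hWu1, hWu2, hWu3⟩ := trace_shrink (r := fun a b => a ≤ b)
    (K := D (n+2)) (A := Astar) (G₀ := GU)
    (fun a => le_refl a) (fun a b c => le_trans) hG (hcpt (n+2))
    inter_subset_right hsatU isOpen_interior hALU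
  obtain ⟨Wv, hWvo, hWv1, hWv2, hWv3⟩ := trace_shrink (r := fun a b => b ≤ a)
    (K := D (n+2)) (A := Bstar) (G₀ := GV)
    (fun a => le_refl a) (fun a b c hab hbc => hbc.trans hab) hdec_closed (hcpt (n+2))
    inter_subset_right hsatV isOpen_interior hBLV
  -- define the new sets
  refine ⟨Wu ∩ interior (D (n+1)), Wv ∩ interior (D (n+1)),
    hWuo.inter isOpen_interior, hWvo.inter isOpen_interior, ?_, ?_, ?_, ?_⟩
  · exact fun z hz => hmono (n+1) (interior_subset hz.2)
  · exact fun z hz => hmono (n+1) (interior_subset hz.2)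
  · -- NormInv
    have hD12 : D (n+1) ⊆ D (n+2) := (hmono (n+1)).trans interior_subset
    have hU'GU : Wu ∩ interior (D (n+1)) ⊆ GU := by
      intro z hz
      exact hWu2 ⟨hz.1, hD12 (interior_subset hz.2)⟩
    have hV'GV : Wv ∩ interior (D (n+1)) ⊆ GV := by
      intro z hz
      exact hWv2 ⟨hz.1, hD12 (interior_subset hz.2)⟩
    have hclU' : closure (Wu ∩ interior (D (n+1))) ⊆ closure GU ∩ D (n+1) :=
      subset_inter (closure_mono hU'GU)
        (closure_minimal (fun z hz => interior_subset hz.2) (hcpt (n+1)).isClosed)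
    have hclV' : closure (Wv ∩ interior (D (n+1))) ⊆ closure GV ∩ D (n+1) :=
      subset_inter (closure_mono hV'GV)
        (closure_minimal (fun z hz => interior_subset hz.2) (hcpt (n+1)).isClosed)
    rintro q p (hq | hq) (hp | hp) hqp
    · exact hstrong q (hclV' hq).1 p (hclU' hp).1 hqp
    · -- q ∈ closure V', p ∈ A
      have hqA : q ∈ A := by
        rw [← hAd]; exact ⟨p, hp, hqp⟩
      have hqAst : q ∈ Astar :=
        ⟨⟨q, Or.inr ⟨hqA, (hclV' hq).2⟩, le_refl q⟩, hD12 (hclV' hq).2⟩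
      exact hstrong q (hclV' hq).1 q (subset_closure (hALU hqAst)) (le_refl q)
    · -- q ∈ B, p ∈ closure U'
      have hpB : p ∈ B := by
        rw [← hBi]; exact ⟨q, hq, hqp⟩
      have hpBst : p ∈ Bstar :=
        ⟨⟨p, Or.inr ⟨hpB, (hclU' hp).2⟩, le_refl p⟩, hD12 (hclU' hp).2⟩
      exact hstrong p (subset_closure (hBLV hpBst)) p (hclU' hp).1 (le_refl p)
    · -- q ∈ B, p ∈ A
      have hpB : p ∈ B := by
        rw [← hBi]; exact ⟨q, hq, hqp⟩
      exact absurd (mem_inter hp hpB) (by rw [hAB]; exact notMem_empty p)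
  · -- NormStep
    have hD12 : D (n+1) ⊆ D (n+2) := (hmono (n+1)).trans interior_subset
    have hDn1 : D n ⊆ D (n+1) := (hmono n).trans interior_subset
    have hAstarU' : Astar ∩ interior (D (n+1)) ⊆ Wu ∩ interior (D (n+1)) := by
      rintro z ⟨hz1, hz2⟩
      exact ⟨(hWu1 ⟨hz1.1, hz1.2⟩).1, hz2⟩
    have hBstarV' : Bstar ∩ interior (D (n+1)) ⊆ Wv ∩ interior (D (n+1)) := by
      rintro z ⟨hz1, hz2⟩
      exact ⟨(hWv1 ⟨hz1.1, hz1.2⟩).1, hz2⟩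
    refine ⟨?_, ?_, ?_, ?_, ?_, ?_⟩
    · intro u hu
      refine hAstarU' ⟨⟨⟨u, Or.inl (subset_closure hu), le_refl u⟩, ?_⟩, hUs hu⟩
      exact hD12 (interior_subset (hUs hu))
    · intro v hv
      refine hBstarV' ⟨⟨⟨v, Or.inl (subset_closure hv), le_refl v⟩, ?_⟩, hVs hv⟩
      exact hD12 (interior_subset (hVs hv))
    · rintro a ⟨haA, haD⟩
      refine hAstarU' ⟨⟨⟨a, Or.inr ⟨haA, hDn1 haD⟩, le_refl a⟩, hD12 (hDn1 haD)⟩, hmono n haD⟩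
    · rintro b ⟨hbB, hbD⟩
      refine hBstarV' ⟨⟨⟨b, Or.inr ⟨hbB, hDn1 hbD⟩, le_refl b⟩, hD12 (hDn1 hbD)⟩, hmono n hbD⟩
    · rintro z hz ⟨p, hp, hzp⟩
      exact hAstarU' ⟨⟨⟨p, hp, hzp⟩, hD12 (interior_subset hz)⟩, hz⟩
    · rintro z hz ⟨q, hq, hqz⟩
      exact hBstarV' ⟨⟨⟨q, hq, hqz⟩, hD12 (interior_subset hz)⟩, hz⟩


theorem normality_main [T2Space E] [LocallyCompactSpace E]
    (hG : IsClosed {p : E × E | p.1 ≤ p.2})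
    {A B : Set E} (hA : IsClosed A) (hAd : decHull A = A)
    (hB : IsClosed B) (hBi : incHull B = B) (hAB : A ∩ B = ∅)
    {D : ℕ → Set E} (hcpt : ∀ n, IsCompact (D n))
    (hmono : ∀ n, D n ⊆ interior (D (n + 1)))
    (hcovD : ∀ x : E, ∃ m, x ∈ D m) :
    ∃ U V : Set E, IsOpen U ∧ decHull U = U ∧ IsOpen V ∧ incHull V = V ∧
      A ⊆ U ∧ B ⊆ V ∧ U ∩ V = ∅ := by
  classical
  have base : IsOpen (∅ : Set E) ∧ IsOpen (∅ : Set E) ∧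
      (∅ : Set E) ⊆ interior (D 1) ∧ (∅ : Set E) ⊆ interior (D 1) ∧
      NormInv A B ∅ ∅ := by
    refine ⟨isOpen_empty, isOpen_empty, empty_subset _, empty_subset _, ?_⟩
    intro q p hq hp hqp
    rw [closure_empty] at hq hp
    simp only [empty_union] at hq hp
    have hpB : p ∈ B := by rw [← hBi]; exact ⟨q, hq, hqp⟩
    exact absurd (mem_inter hp hpB) (by rw [hAB]; exact notMem_empty p)
  have hstepx : ∀ (n : ℕ) (UV : Set E × Set E),
      (IsOpen UV.1 ∧ IsOpen UV.2 ∧ UV.1 ⊆ interior (D (n+1)) ∧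
        UV.2 ⊆ interior (D (n+1)) ∧ NormInv A B UV.1 UV.2) →
      ∃ UV' : Set E × Set E, (IsOpen UV'.1 ∧ IsOpen UV'.2 ∧
        UV'.1 ⊆ interior (D (n+2)) ∧ UV'.2 ⊆ interior (D (n+2)) ∧
        NormInv A B UV'.1 UV'.2) ∧ NormStep A B D n UV.1 UV.2 UV'.1 UV'.2 := by
    rintro n ⟨U, V⟩ ⟨h1, h2, h3, h4, h5⟩
    obtain ⟨U', V', o1, o2, s1, s2, inv, st⟩ :=
      norm_step hG hA hAd hB hBi hAB hcpt hmono n U V h1 h2 h3 h4 h5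
    exact ⟨(U', V'), ⟨o1, o2, s1, s2, inv⟩, st⟩
  let g : ∀ n : ℕ, {UV : Set E × Set E // IsOpen UV.1 ∧ IsOpen UV.2 ∧
      UV.1 ⊆ interior (D (n+1)) ∧ UV.2 ⊆ interior (D (n+1)) ∧
      NormInv A B UV.1 UV.2} := fun n => Nat.rec ⟨(∅, ∅), base⟩
    (fun n p => ⟨(hstepx n p.1 p.2).choose, (hstepx n p.1 p.2).choose_spec.1⟩) n
  have hstep : ∀ n : ℕ, NormStep A B D n (g n).1.1 (g n).1.2 (g (n+1)).1.1 (g (n+1)).1.2 :=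
    fun n => (hstepx n (g n).1 (g n).2).choose_spec.2
  have hUmono : ∀ {m n : ℕ}, m ≤ n → (g m).1.1 ⊆ (g n).1.1 := by
    intro m n h
    induction n with
    | zero => obtain rfl := Nat.le_zero.1 h; exact subset_rfl
    | succ k ih =>
      rcases Nat.lt_or_ge m (k+1) with h' | h'
      · exact (ih (Nat.lt_succ_iff.1 h')).trans (hstep k).1
      · obtain rfl : m = k + 1 := le_antisymm h h'
        exact subset_rfl
  have hVmono : ∀ {m n : ℕ}, m ≤ n → (g m).1.2 ⊆ (g n).1.2 := by
    intro m n h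
    induction n with
    | zero => obtain rfl := Nat.le_zero.1 h; exact subset_rfl
    | succ k ih =>
      rcases Nat.lt_or_ge m (k+1) with h' | h'
      · exact (ih (Nat.lt_succ_iff.1 h')).trans (hstep k).2.1
      · obtain rfl : m = k + 1 := le_antisymm h h'
        exact subset_rfl
  refine ⟨⋃ n, (g n).1.1, ⋃ n, (g n).1.2, isOpen_iUnion fun n => (g n).2.1,
    ?_, isOpen_iUnion fun n => (g n).2.2.1, ?_, ?_, ?_, ?_⟩
  · -- decHull U = U
    refine Subset.antisymm ?_ (fun z hz => ⟨z, hz, le_refl z⟩)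
    rintro z ⟨u, hu, hzu⟩
    obtain ⟨n, hn⟩ := mem_iUnion.1 hu
    obtain ⟨m₀, hm₀⟩ := hcovD z
    set m := max n m₀ with hm
    have hzD : z ∈ D m := exh_mono hmono (le_max_right n m₀) hm₀
    refine mem_iUnion.2 ⟨m+1, (hstep m).2.2.2.2.1 z (hmono m hzD) ?_⟩
    exact ⟨u, Or.inl (subset_closure (hUmono (le_max_left n m₀) hn)), hzu⟩
  · -- incHull V = V
    refine Subset.antisymm ?_ (fun z hz => ⟨z, hz, le_refl z⟩)
    rintro z ⟨v, hv, hvz⟩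
    obtain ⟨n, hn⟩ := mem_iUnion.1 hv
    obtain ⟨m₀, hm₀⟩ := hcovD z
    set m := max n m₀ with hm
    have hzD : z ∈ D m := exh_mono hmono (le_max_right n m₀) hm₀
    refine mem_iUnion.2 ⟨m+1, (hstep m).2.2.2.2.2 z (hmono m hzD) ?_⟩
    exact ⟨v, Or.inl (subset_closure (hVmono (le_max_left n m₀) hn)), hvz⟩
  · -- A ⊆ U
    intro a ha
    obtain ⟨m, hmD⟩ := hcovD a
    exact mem_iUnion.2 ⟨m+1, (hstep m).2.2.1 ⟨ha, hmD⟩⟩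
  · -- B ⊆ V
    intro b hb
    obtain ⟨m, hmD⟩ := hcovD b
    exact mem_iUnion.2 ⟨m+1, (hstep m).2.2.2.1 ⟨hb, hmD⟩⟩
  · -- disjoint
    rw [eq_empty_iff_forall_notMem]
    rintro z ⟨hzU, hzV⟩
    obtain ⟨n, hn⟩ := mem_iUnion.1 hzU
    obtain ⟨m, hm⟩ := mem_iUnion.1 hzV
    set N := max n m with hN
    exact (g N).2.2.2.2.2 z z
      (Or.inl (subset_closure (hVmono (le_max_right n m) hm)))
      (Or.inl (subset_closure (hUmono (le_max_left n m) hn))) (le_refl z)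


/-- convexity invariants -/
def ConvInv (x : E) (Cset : Set E) (D : ℕ → Set E) (U V : Set E) (J : ℕ) : Prop :=
  (∀ q ∈ closure V ∪ {x}, ∀ p ∈ closure U ∪ {x}, ∀ w ∈ Cset, ¬(q ≤ w ∧ w ≤ p)) ∧
  (∀ q ∈ closure V ∪ {x}, ∀ p ∈ closure U ∪ {x}, ∀ v, q ≤ v → v ≤ p → v ∈ D J)

def ConvStep (x : E) (D : ℕ → Set E) (n : ℕ) (U V U' V' : Set E) : Prop :=
  U ⊆ U' ∧ V ⊆ V' ∧ x ∈ U' ∧ x ∈ V' ∧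
  (∀ z, z ∈ interior (D (n+1)) → (∃ p ∈ closure U ∪ {x}, z ≤ p) → z ∈ U') ∧
  (∀ z, z ∈ interior (D (n+1)) → (∃ q ∈ closure V ∪ {x}, q ≤ z) → z ∈ V')

theorem conv_step [T2Space E] [LocallyCompactSpace E]
    (hG : IsClosed {p : E × E | p.1 ≤ p.2})
    {R : Set (E × E)} (hR1 : R ⊆ {p : E × E | p.1 ≤ p.2})
    (hmin : ∀ T : Set (E × E), IsClosed T → (∀ a : E, (a, a) ∈ T) →
      (∀ a b c : E, (a, b) ∈ T → (b, c) ∈ T → (a, c) ∈ T) → R ⊆ T →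
      {p : E × E | p.1 ≤ p.2} ⊆ T)
    {D : ℕ → Set E} (hcpt : ∀ n, IsCompact (D n))
    (hmono : ∀ n, D n ⊆ interior (D (n + 1)))
    (hRD : ∀ n, closure (relImage R (D n)) ⊆ interior (D (n + 1)))
    (hcov : (⋃ n, D n) = univ)
    {x : E} (hxD : x ∈ D 0) {Cset : Set E} (hCc : IsClosed Cset)
    (n : ℕ) (U V : Set E) (J : ℕ) (hUo : IsOpen U) (hVo : IsOpen V)
    (hUs : U ⊆ interior (D (n+1))) (hVs : V ⊆ interior (D (n+1)))
    (hinv : ConvInv x Cset D U V J) :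
    ∃ U' V' : Set E, ∃ J' : ℕ, IsOpen U' ∧ IsOpen V' ∧ U' ⊆ interior (D (n+2)) ∧
      V' ⊆ interior (D (n+2)) ∧ ConvInv x Cset D U' V' J' ∧
      ConvStep x D n U V U' V' := by
  obtain ⟨hNoBad, hJ⟩ := hinv
  have hdec_closed : IsClosed {p : E × E | p.2 ≤ p.1} := flip_closed hG
  have hD12 : D (n+1) ⊆ D (n+2) := (hmono (n+1)).trans interior_subset
  have hxDn : ∀ m, x ∈ D m := fun m => exh_mono hmono (Nat.zero_le m) hxD
  have hclU : closure U ⊆ D (n+1) :=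
    closure_minimal (hUs.trans interior_subset) (hcpt (n+1)).isClosed
  have hclV : closure V ⊆ D (n+1) :=
    closure_minimal (hVs.trans interior_subset) (hcpt (n+1)).isClosed
  set Acl := closure U ∪ {x} with hAclDef
  set Bcl := closure V ∪ {x} with hBclDef
  have hAclc : IsCompact Acl :=
    ((hcpt (n+1)).of_isClosed_subset isClosed_closure hclU).union isCompact_singleton
  have hBclc : IsCompact Bcl :=
    ((hcpt (n+1)).of_isClosed_subset isClosed_closure hclV).union isCompact_singleton
  set Astar := decHull Acl ∩ D (n+2) with hAstarDef
  set Bstar := incHull Bcl ∩ D (n+2) with hBstarDef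
  have hAstarc : IsCompact Astar :=
    (hcpt (n+2)).inter_left (rHull_closed_of_compact hdec_closed hAclc)
  have hBstarc : IsCompact Bstar :=
    (hcpt (n+2)).inter_left (rHull_closed_of_compact hG hBclc)
  have hxA : x ∈ Astar := ⟨⟨x, Or.inr rfl, le_refl x⟩, hxDn (n+2)⟩
  have hxB : x ∈ Bstar := ⟨⟨x, Or.inr rfl, le_refl x⟩, hxDn (n+2)⟩
  -- S1 : hull interval bound
  have hS1 : ∀ q ∈ Bstar, ∀ p ∈ Astar, ∀ v, q ≤ v → v ≤ p → v ∈ D J := by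
    rintro q ⟨⟨q₀, hq₀, hq₀q⟩, _⟩ p ⟨⟨p₀, hp₀, hpp₀⟩, _⟩ v hqv hvp
    exact hJ q₀ hq₀ p₀ hp₀ v (hq₀q.trans hqv) (hvp.trans hpp₀)
  -- S3 : localize
  obtain ⟨V₀, U₀, J', hV₀o, hU₀o, hBV₀, hAU₀, hloc⟩ :=
    interval_localize hG hR1 hmin hcpt hmono hRD hcov hBstarc hAstarc hS1
  -- S4 : BadLoc
  set BadLoc := {p : E × E | ∃ w ∈ Cset ∩ D J', p.1 ≤ w ∧ w ≤ p.2} with hBadLocDef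
  have hBadc : IsClosed BadLoc := crossSet_closed hG ((hcpt J').inter_left hCc)
  have hnobadhull : ∀ q ∈ Bstar, ∀ p ∈ Astar, (q, p) ∉ BadLoc := by
    rintro q ⟨⟨q₀, hq₀, hq₀q⟩, _⟩ p ⟨⟨p₀, hp₀, hpp₀⟩, _⟩ ⟨w, hw, hqw, hwp⟩
    exact hNoBad q₀ hq₀ p₀ hp₀ w hw.1 ⟨hq₀q.trans hqw, hwp.trans hpp₀⟩
  obtain ⟨O₁, O₂, hO₁o, hO₂o, hBO₁, hAO₂, htube⟩ := tube_sep hBadc hBstarc hAstarc hnobadhull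
  -- closure-controlled neighborhoods
  obtain ⟨LV, hLVc, hBLV, hLVsub⟩ := exists_compact_between hBstarc (hO₁o.inter hV₀o)
    (subset_inter hBO₁ hBV₀)
  obtain ⟨LU, hLUc, hALU, hLUsub⟩ := exists_compact_between hAstarc (hO₂o.inter hU₀o)
    (subset_inter hAO₂ hAU₀)
  set GV := interior LV with hGVdef
  set GU := interior LU with hGUdef
  have hclGV : closure GV ⊆ O₁ ∩ V₀ :=
    (closure_minimal interior_subset hLVc.isClosed).trans hLVsub
  have hclGU : closure GU ⊆ O₂ ∩ U₀ :=
    (closure_minimal interior_subset hLUc.isClosed).trans hLUsub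
  -- trace shrinks
  have hsatU : ∀ z ∈ D (n+2), ∀ a ∈ Astar, z ≤ a → z ∈ Astar := by
    rintro z hz a ⟨⟨p, hp, hap⟩, _⟩ hza
    exact ⟨⟨p, hp, hza.trans hap⟩, hz⟩
  have hsatV : ∀ z ∈ D (n+2), ∀ b ∈ Bstar, b ≤ z → z ∈ Bstar := by
    rintro z hz b ⟨⟨q, hq, hqb⟩, _⟩ hbz
    exact ⟨⟨q, hq, hqb.trans hbz⟩, hz⟩
  obtain ⟨Wu, hWuo, hWu1, hWu2, hWu3⟩ := trace_shrink (r := fun a b => a ≤ b)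
    (K := D (n+2)) (A := Astar) (G₀ := GU)
    (fun a => le_refl a) (fun a b c => le_trans) hG (hcpt (n+2))
    inter_subset_right hsatU isOpen_interior hALU
  obtain ⟨Wv, hWvo, hWv1, hWv2, hWv3⟩ := trace_shrink (r := fun a b => b ≤ a)
    (K := D (n+2)) (A := Bstar) (G₀ := GV)
    (fun a => le_refl a) (fun a b c hab hbc => hbc.trans hab) hdec_closed (hcpt (n+2))
    inter_subset_right hsatV isOpen_interior hBLV
  refine ⟨Wu ∩ interior (D (n+1)), Wv ∩ interior (D (n+1)), J',
    hWuo.inter isOpen_interior, hWvo.inter isOpen_interior,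
    fun z hz => hmono (n+1) (interior_subset hz.2),
    fun z hz => hmono (n+1) (interior_subset hz.2), ?_, ?_⟩
  · -- ConvInv n+1
    have hU'GU : Wu ∩ interior (D (n+1)) ⊆ GU :=
      fun z hz => hWu2 ⟨hz.1, hD12 (interior_subset hz.2)⟩
    have hV'GV : Wv ∩ interior (D (n+1)) ⊆ GV :=
      fun z hz => hWv2 ⟨hz.1, hD12 (interior_subset hz.2)⟩
    have hq' : ∀ q ∈ closure (Wv ∩ interior (D (n+1))) ∪ {x}, q ∈ closure GV := by
      rintro q (hq | hq)
      · exact closure_mono hV'GV hq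
      · rw [hq]; exact subset_closure (hWv2 (hWv1 hxB))
    have hp' : ∀ p ∈ closure (Wu ∩ interior (D (n+1))) ∪ {x}, p ∈ closure GU := by
      rintro p (hp | hp)
      · exact closure_mono hU'GU hp
      · rw [hp]; exact subset_closure (hWu2 (hWu1 hxA))
    constructor
    · rintro q hq p hp w hw ⟨hqw, hwp⟩
      have hqGV := hq' q hq
      have hpGU := hp' p hp
      have hwJ : w ∈ D J' := hloc q (hclGV hqGV).2 p (hclGU hpGU).2 w hqw hwp
      exact htube q (hclGV hqGV).1 p (hclGU hpGU).1 ⟨w, ⟨hw, hwJ⟩, hqw, hwp⟩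
    · intro q hq p hp v hqv hvp
      exact hloc q (hclGV (hq' q hq)).2 p (hclGU (hp' p hp)).2 v hqv hvp
  · -- ConvStep
    have hAstarU' : Astar ∩ interior (D (n+1)) ⊆ Wu ∩ interior (D (n+1)) :=
      fun z hz => ⟨(hWu1 hz.1).1, hz.2⟩
    have hBstarV' : Bstar ∩ interior (D (n+1)) ⊆ Wv ∩ interior (D (n+1)) :=
      fun z hz => ⟨(hWv1 hz.1).1, hz.2⟩
    refine ⟨?_, ?_, ?_, ?_, ?_, ?_⟩
    · intro u hu
      exact hAstarU' ⟨⟨⟨u, Or.inl (subset_closure hu), le_refl u⟩,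
        hD12 (interior_subset (hUs hu))⟩, hUs hu⟩
    · intro v hv
      exact hBstarV' ⟨⟨⟨v, Or.inl (subset_closure hv), le_refl v⟩,
        hD12 (interior_subset (hVs hv))⟩, hVs hv⟩
    · exact hAstarU' ⟨hxA, (hmono n) (hxDn n)⟩
    · exact hBstarV' ⟨hxB, (hmono n) (hxDn n)⟩
    · rintro z hz ⟨p, hp, hzp⟩
      exact hAstarU' ⟨⟨⟨p, hp, hzp⟩, hD12 (interior_subset hz)⟩, hz⟩
    · rintro z hz ⟨q, hq, hqz⟩
      exact hBstarV' ⟨⟨⟨q, hq, hqz⟩, hD12 (interior_subset hz)⟩, hz⟩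


theorem conv_main [T2Space E] [LocallyCompactSpace E]
    (hG : IsClosed {p : E × E | p.1 ≤ p.2})
    (hanti : ∀ a b : E, a ≤ b → b ≤ a → a = b)
    {R : Set (E × E)} (hR1 : R ⊆ {p : E × E | p.1 ≤ p.2})
    (hmin : ∀ T : Set (E × E), IsClosed T → (∀ a : E, (a, a) ∈ T) →
      (∀ a b c : E, (a, b) ∈ T → (b, c) ∈ T → (a, c) ∈ T) → R ⊆ T →
      {p : E × E | p.1 ≤ p.2} ⊆ T)
    {D : ℕ → Set E} (hcpt : ∀ n, IsCompact (D n))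
    (hmono : ∀ n, D n ⊆ interior (D (n + 1)))
    (hRD : ∀ n, closure (relImage R (D n)) ⊆ interior (D (n + 1)))
    (hcov : (⋃ n, D n) = univ)
    {x : E} (hxD : x ∈ D 0) {O : Set E} (hOo : IsOpen O) (hxO : x ∈ O) :
    ∃ U V : Set E, IsOpen U ∧ decHull U = U ∧ IsOpen V ∧ incHull V = V ∧
      x ∈ U ∩ V ∧ U ∩ V ⊆ O := by
  classical
  have hcovD : ∀ z : E, ∃ m, z ∈ D m := by
    intro z
    have : z ∈ ⋃ n, D n := by rw [hcov]; exact mem_univ z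
    exact mem_iUnion.1 this
  set Cset := Oᶜ with hCsetDef
  have hCc : IsClosed Cset := hOo.isClosed_compl
  have base : IsOpen (∅ : Set E) ∧ IsOpen (∅ : Set E) ∧
      (∅ : Set E) ⊆ interior (D 1) ∧ (∅ : Set E) ⊆ interior (D 1) ∧
      ConvInv x Cset D ∅ ∅ 0 := by
    refine ⟨isOpen_empty, isOpen_empty, empty_subset _, empty_subset _, ?_, ?_⟩
    · rintro q hq p hp w hw ⟨hqw, hwp⟩
      rw [closure_empty, empty_union, mem_singleton_iff] at hq hp
      rw [hq] at hqw; rw [hp] at hwp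
      have hwx : w = x := hanti w x hwp hqw
      rw [hwx] at hw
      exact hw hxO
    · intro q hq p hp v hqv hvp
      rw [closure_empty, empty_union, mem_singleton_iff] at hq hp
      rw [hq] at hqv; rw [hp] at hvp
      have hvx : v = x := hanti v x hvp hqv
      rw [hvx]; exact hxD
  have hstepx : ∀ (n : ℕ) (S : Set E × Set E × ℕ),
      (IsOpen S.1 ∧ IsOpen S.2.1 ∧ S.1 ⊆ interior (D (n+1)) ∧
        S.2.1 ⊆ interior (D (n+1)) ∧ ConvInv x Cset D S.1 S.2.1 S.2.2) →
      ∃ S' : Set E × Set E × ℕ, (IsOpen S'.1 ∧ IsOpen S'.2.1 ∧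
        S'.1 ⊆ interior (D (n+2)) ∧ S'.2.1 ⊆ interior (D (n+2)) ∧
        ConvInv x Cset D S'.1 S'.2.1 S'.2.2) ∧ ConvStep x D n S.1 S.2.1 S'.1 S'.2.1 := by
    rintro n ⟨U, V, J⟩ ⟨h1, h2, h3, h4, h5⟩
    obtain ⟨U', V', J', o1, o2, s1, s2, inv, st⟩ :=
      conv_step hG hR1 hmin hcpt hmono hRD hcov hxD hCc n U V J h1 h2 h3 h4 h5
    exact ⟨(U', V', J'), ⟨o1, o2, s1, s2, inv⟩, st⟩
  let g : ∀ n : ℕ, {S : Set E × Set E × ℕ // IsOpen S.1 ∧ IsOpen S.2.1 ∧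
      S.1 ⊆ interior (D (n+1)) ∧ S.2.1 ⊆ interior (D (n+1)) ∧
      ConvInv x Cset D S.1 S.2.1 S.2.2} := fun n => Nat.rec ⟨(∅, ∅, 0), base⟩
    (fun n p => ⟨(hstepx n p.1 p.2).choose, (hstepx n p.1 p.2).choose_spec.1⟩) n
  have hstep : ∀ n : ℕ, ConvStep x D n (g n).1.1 (g n).1.2.1 (g (n+1)).1.1 (g (n+1)).1.2.1 :=
    fun n => (hstepx n (g n).1 (g n).2).choose_spec.2
  have hUmono : ∀ {m n : ℕ}, m ≤ n → (g m).1.1 ⊆ (g n).1.1 := by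
    intro m n h
    induction n with
    | zero => obtain rfl := Nat.le_zero.1 h; exact subset_rfl
    | succ k ih =>
      rcases Nat.lt_or_ge m (k+1) with h' | h'
      · exact (ih (Nat.lt_succ_iff.1 h')).trans (hstep k).1
      · obtain rfl : m = k + 1 := le_antisymm h h'
        exact subset_rfl
  have hVmono : ∀ {m n : ℕ}, m ≤ n → (g m).1.2.1 ⊆ (g n).1.2.1 := by
    intro m n h
    induction n with
    | zero => obtain rfl := Nat.le_zero.1 h; exact subset_rfl
    | succ k ih =>
      rcases Nat.lt_or_ge m (k+1) with h' | h'
      · exact (ih (Nat.lt_succ_iff.1 h')).trans (hstep k).2.1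
      · obtain rfl : m = k + 1 := le_antisymm h h'
        exact subset_rfl
  refine ⟨⋃ n, (g n).1.1, ⋃ n, (g n).1.2.1, isOpen_iUnion fun n => (g n).2.1,
    ?_, isOpen_iUnion fun n => (g n).2.2.1, ?_, ?_, ?_⟩
  · refine Subset.antisymm ?_ (fun z hz => ⟨z, hz, le_refl z⟩)
    rintro z ⟨u, hu, hzu⟩
    obtain ⟨n, hn⟩ := mem_iUnion.1 hu
    obtain ⟨m₀, hm₀⟩ := hcovD z
    set m := max n m₀ with hm
    have hzD : z ∈ D m := exh_mono hmono (le_max_right n m₀) hm₀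
    refine mem_iUnion.2 ⟨m+1, (hstep m).2.2.2.2.1 z (hmono m hzD) ?_⟩
    exact ⟨u, Or.inl (subset_closure (hUmono (le_max_left n m₀) hn)), hzu⟩
  · refine Subset.antisymm ?_ (fun z hz => ⟨z, hz, le_refl z⟩)
    rintro z ⟨v, hv, hvz⟩
    obtain ⟨n, hn⟩ := mem_iUnion.1 hv
    obtain ⟨m₀, hm₀⟩ := hcovD z
    set m := max n m₀ with hm
    have hzD : z ∈ D m := exh_mono hmono (le_max_right n m₀) hm₀
    refine mem_iUnion.2 ⟨m+1, (hstep m).2.2.2.2.2 z (hmono m hzD) ?_⟩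
    exact ⟨v, Or.inl (subset_closure (hVmono (le_max_left n m₀) hn)), hvz⟩
  · exact ⟨mem_iUnion.2 ⟨1, (hstep 0).2.2.1⟩, mem_iUnion.2 ⟨1, (hstep 0).2.2.2.1⟩⟩
  · rintro z ⟨hzU, hzV⟩
    by_contra hzO
    obtain ⟨n, hn⟩ := mem_iUnion.1 hzU
    obtain ⟨m, hm⟩ := mem_iUnion.1 hzV
    set N := max n m with hN
    have hinv := (g N).2.2.2.2.2
    exact hinv.1 z (Or.inl (subset_closure (hVmono (le_max_right n m) hm)))
      z (Or.inl (subset_closure (hUmono (le_max_left n m) hn)))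
      z hzO ⟨le_refl z, le_refl z⟩


end Aux

/-- Every compactly generated closed ordered space whose topology is locally
compact and σ-compact is convex and normally ordered. -/
theorem convex_normallyOrdered_of_compactlyGenerated {E : Type*} [TopologicalSpace E]
    [Preorder E]
    (hG : IsClosed {p : E × E | p.1 ≤ p.2})
    (hanti : ∀ a b : E, a ≤ b → b ≤ a → a = b)
    (hcg : ∃ R : Set (E × E), R ⊆ {p : E × E | p.1 ≤ p.2} ∧
      (∀ K : Set E, IsCompact K → IsCompact (closure (relImage R K))) ∧
      (∀ T : Set (E × E), IsClosed T → (∀ a : E, (a, a) ∈ T) →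
        (∀ a b c : E, (a, b) ∈ T → (b, c) ∈ T → (a, c) ∈ T) → R ⊆ T →
        {p : E × E | p.1 ≤ p.2} ⊆ T))
    (hloc : ∀ x : E, ∃ K : Set E, IsCompact K ∧ K ∈ 𝓝 x)
    (hsigma : ∃ K : ℕ → Set E, (∀ n, IsCompact (K n)) ∧ (⋃ n, K n) = Set.univ) :
    (∀ x : E, ∀ O : Set E, IsOpen O → x ∈ O →
      ∃ U V : Set E, IsOpen U ∧ decHull U = U ∧ IsOpen V ∧ incHull V = V ∧
        x ∈ U ∩ V ∧ U ∩ V ⊆ O) ∧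
    (∀ x : E, IsClosed (incHull {x}) ∧ IsClosed (decHull {x})) ∧
    (∀ A B : Set E, IsClosed A → decHull A = A → IsClosed B → incHull B = B →
      A ∩ B = ∅ →
      ∃ U V : Set E, IsOpen U ∧ decHull U = U ∧ IsOpen V ∧ incHull V = V ∧
        A ⊆ U ∧ B ⊆ V ∧ U ∩ V = ∅) := by
  classical
  obtain ⟨R, hR1, hRcpt, hmin⟩ := hcg
  obtain ⟨Kσ, hKσc, hKσcov⟩ := hsigma
  haveI : T2Space E := t2_of_closedOrder hG hanti
  haveI : WeaklyLocallyCompactSpace E :=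
    ⟨fun x => (hloc x).imp fun K hK => ⟨hK.1, hK.2⟩⟩
  haveI : LocallyCompactSpace E := inferInstance
  refine ⟨?_, ?_, ?_⟩
  · -- convexity
    intro x O hOo hxO
    obtain ⟨D, hcpt, hmono, hRD, hKσD, hxD0⟩ :=
      exists_exhaustion hRcpt hKσc (isCompact_singleton : IsCompact {x})
    have hcov : (⋃ n, D n) = Set.univ := by
      apply Set.eq_univ_of_forall
      intro z
      have hz : z ∈ ⋃ n, Kσ n := by rw [hKσcov]; exact Set.mem_univ z
      obtain ⟨m, hm⟩ := Set.mem_iUnion.1 hz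
      exact Set.mem_iUnion.2 ⟨m+1, interior_subset (hKσD m hm)⟩
    exact conv_main hG hanti hR1 hmin hcpt hmono hRD hcov
      (hxD0 (Set.mem_singleton x)) hOo hxO
  · -- closedness of point hulls
    intro x
    constructor
    · have h : incHull {x} = (fun y => (x, y)) ⁻¹' {p : E × E | p.1 ≤ p.2} := by
        ext y
        constructor
        · rintro ⟨x', hx', hle⟩
          rw [Set.mem_singleton_iff] at hx'
          rw [hx'] at hle
          exact hle
        · intro hle
          exact ⟨x, rfl, hle⟩
      rw [h]
      exact hG.preimage (Continuous.prodMk continuous_const continuous_id)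
    · have h : decHull {x} = (fun y => (y, x)) ⁻¹' {p : E × E | p.1 ≤ p.2} := by
        ext y
        constructor
        · rintro ⟨x', hx', hle⟩
          rw [Set.mem_singleton_iff] at hx'
          rw [hx'] at hle
          exact hle
        · intro hle
          exact ⟨x, rfl, hle⟩
      rw [h]
      exact hG.preimage (Continuous.prodMk continuous_id continuous_const)
  · -- normality
    intro A B hA hAd hB hBi hAB
    obtain ⟨D, hcpt, hmono, hRD, hKσD, _⟩ :=
      exists_exhaustion hRcpt hKσc (isCompact_empty : IsCompact (∅ : Set E))
    have hcovD : ∀ z : E, ∃ m, z ∈ D m := by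
      intro z
      have hz : z ∈ ⋃ n, Kσ n := by rw [hKσcov]; exact Set.mem_univ z
      obtain ⟨m, hm⟩ := Set.mem_iUnion.1 hz
      exact ⟨m+1, interior_subset (hKσD m hm)⟩
    exact normality_main hG hA hAd hB hBi hAB hcpt hmono hcovD
end
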